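/- arXiv:2211.10662 — 5 statements merged into one kernel-verified Lean document; each statement's English description precedes it below -/
import Mathlib

section
/- Let $M$ be a quasi-pseudodistance on a set $S$: there exists $C > 1$ such that $M(x,y) \le C(M(x,z) + M(z,y))$ for all $x,y,z \in S$, and $M \ge 0$. Then for $\epsilon_0 = \log 2 / (2 \log(2C))$ and any $0 < \epsilon \le \epsilon_0$, for every finite chain of points $x = x_0, x_1, \dots, x_k, x_{k+1} = y$ in $S$ one has $M(x,y)^\epsilon \le 2 \sum_{i=0}^{k} M(x_i, x_{i+1})^\epsilon$. -/
open Finset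

private lemma rpow_le_root {b T ε : ℝ} (hb : 0 ≤ b) (hε : 0 < ε)
    (h : b ^ ε ≤ T) : b ≤ T ^ (1/ε) := by
  calc b = (b ^ ε) ^ (1/ε) := by
        rw [← Real.rpow_mul hb, mul_one_div, div_self (ne_of_gt hε), Real.rpow_one]
    _ ≤ T ^ (1/ε) := Real.rpow_le_rpow (Real.rpow_nonneg hb ε) h (by positivity)

private lemma chain_aux {S : Type*} (M : S → S → ℝ) (C : ℝ) (hC : 1 < C)
    (hnn : ∀ x y, 0 ≤ M x y)
    (htri : ∀ x y z, M x y ≤ C * (M x z + M z y))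
    (ε : ℝ) (hε0 : 0 < ε) (hpow : (4 * C ^ 2) ^ ε ≤ 2) :
    ∀ k : ℕ, ∀ x : ℕ → S,
      M (x 0) (x (k+1)) ^ ε ≤ 2 * ∑ i ∈ Finset.range (k+1), M (x i) (x (i+1)) ^ ε := by
  intro k
  induction k using Nat.strong_induction_on with
  | _ k IH =>
    intro x
    classical
    set a : ℕ → ℝ := fun i => M (x i) (x (i+1)) ^ ε with ha
    have hanon : ∀ i, 0 ≤ a i := fun i => Real.rpow_nonneg (hnn _ _) ε
    set T : ℝ := ∑ i ∈ range (k+1), a i with hTdef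
    have hT : 0 ≤ T := Finset.sum_nonneg fun i _ => hanon i
    rcases Nat.eq_zero_or_pos k with rfl | hk
    · have : T = a 0 := by simp [hTdef]
      show a 0 ≤ 2 * T
      rw [this]
      linarith [hanon 0]
    -- k ≥ 1
    have claim : M (x 0) (x (k+1)) ≤ (4 * C ^ 2) * T ^ (1/ε) := by
      obtain ⟨j, hjk, hPj, hgreat⟩ : ∃ j, j ≤ k ∧ (∑ i ∈ range j, a i ≤ T / 2) ∧
          ∀ m, j < m → m ≤ k → ¬ (∑ i ∈ range m, a i ≤ T / 2) := by
        classical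
        exact ⟨Nat.findGreatest (fun n => ∑ i ∈ range n, a i ≤ T / 2) k,
          Nat.findGreatest_le k,
          Nat.findGreatest_spec (P := fun n => ∑ i ∈ range n, a i ≤ T / 2)
            (Nat.zero_le k)
            (by show ∑ i ∈ range 0, a i ≤ T / 2
                rw [Finset.sum_range_zero]; linarith),
          fun m h1 h2 => Nat.findGreatest_is_greatest h1 h2⟩
      have hroot : ∀ u v : S, M u v ^ ε ≤ T → M u v ≤ T ^ (1/ε) :=
        fun u v h => rpow_le_root (hnn u v) hε0 h
      have hTpos : 0 ≤ T ^ (1/ε) := Real.rpow_nonneg hT _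
      have haT : ∀ i, i ∈ range (k+1) → a i ≤ T :=
        fun i hi => Finset.single_le_sum (fun i _ => hanon i) hi
      have hmid : M (x j) (x (j+1)) ≤ T ^ (1/ε) :=
        hroot _ _ (haT j (by simp; omega))
      have hleft : 0 < j → M (x 0) (x j) ≤ T ^ (1/ε) := by
        intro hjpos
        obtain ⟨m, hm⟩ : ∃ m, j = m + 1 := ⟨j - 1, by omega⟩
        have hmk : m < k := by omega
        have h := IH m hmk x
        rw [← hm] at h
        exact hroot _ _ (by linarith)
      have hright : j < k → M (x (j+1)) (x (k+1)) ≤ T ^ (1/ε) := by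
        intro hjk'
        have hnP : ¬ (∑ i ∈ range (j+1), a i ≤ T / 2) := hgreat (j+1) (by omega) (by omega)
        have hsplit : ∑ i ∈ range (j+1), a i + ∑ i ∈ Ico (j+1) (k+1), a i = T := by
          rw [hTdef, Finset.range_eq_Ico, Finset.range_eq_Ico]
          exact Finset.sum_Ico_consecutive a (n := j+1) (k := k+1) (Nat.zero_le _) (by omega)
        have htail : ∑ i ∈ Ico (j+1) (k+1), a i ≤ T / 2 := by
          push_neg at hnP
          linarith
        have h := IH (k - j - 1) (by omega) (fun n => x (n + (j+1)))
        beta_reduce at h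
        have e1 : (k - j - 1 + 1) + (j + 1) = k + 1 := by omega
        rw [e1] at h
        have e2 : ∑ i ∈ range (k - j - 1 + 1), M (x (i + (j+1))) (x (i + 1 + (j+1))) ^ ε
            = ∑ i ∈ Ico (j+1) (k+1), a i := by
          rw [Finset.sum_Ico_eq_sum_range]
          have : k + 1 - (j + 1) = k - j - 1 + 1 := by omega
          rw [this]
          apply Finset.sum_congr rfl
          intro i _
          have : i + 1 + (j + 1) = j + 1 + i + 1 := by omega
          rw [this, Nat.add_comm i (j+1), ha]
        rw [e2] at h
        rw [Nat.zero_add] at h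
        exact hroot _ _ (by linarith)
      rcases Nat.eq_zero_or_pos j with hj0 | hjpos
      · -- j = 0
        have h3 := hright (by omega)
        have h2 := hmid
        rw [hj0] at h2 h3
        have hC0 : (0:ℝ) ≤ C := by linarith
        calc M (x 0) (x (k+1)) ≤ C * (M (x 0) (x (0+1)) + M (x (0+1)) (x (k+1))) :=
              htri _ _ _
          _ ≤ C * (T ^ (1/ε) + T ^ (1/ε)) :=
              mul_le_mul_of_nonneg_left (by linarith) hC0
          _ ≤ 4 * C ^ 2 * T ^ (1/ε) := by
              nlinarith [mul_nonneg (mul_nonneg hC0 hTpos) (by linarith : (0:ℝ) ≤ 2*C - 1)]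
      rcases eq_or_lt_of_le hjk with hjk' | hjlt
      · -- j = k
        have h1 := hleft hjpos
        have h2 := hmid
        rw [hjk'] at h1 h2
        have hC0 : (0:ℝ) ≤ C := by linarith
        calc M (x 0) (x (k+1)) ≤ C * (M (x 0) (x k) + M (x k) (x (k+1))) := htri _ _ _
          _ ≤ C * (T ^ (1/ε) + T ^ (1/ε)) :=
              mul_le_mul_of_nonneg_left (by linarith) hC0
          _ ≤ 4 * C ^ 2 * T ^ (1/ε) := by
              nlinarith [mul_nonneg (mul_nonneg hC0 hTpos) (by linarith : (0:ℝ) ≤ 2*C - 1)]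
      · -- 0 < j < k
        have h1 := hleft hjpos
        have h2 := hmid
        have h3 := hright hjlt
        have hC0 : (0:ℝ) ≤ C := by linarith
        have hb : M (x j) (x (k+1)) ≤ C * (T ^ (1/ε) + T ^ (1/ε)) :=
          le_trans (htri _ _ _) (mul_le_mul_of_nonneg_left (by linarith) hC0)
        calc M (x 0) (x (k+1)) ≤ C * (M (x 0) (x j) + M (x j) (x (k+1))) := htri _ _ _
          _ ≤ C * (T ^ (1/ε) + C * (T ^ (1/ε) + T ^ (1/ε))) :=
              mul_le_mul_of_nonneg_left (by linarith) hC0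
          _ ≤ 4 * C ^ 2 * T ^ (1/ε) := by
              nlinarith [mul_nonneg (mul_nonneg hC0 hTpos) (by linarith : (0:ℝ) ≤ C - 1),
                mul_nonneg (mul_nonneg hC0 hTpos) hC0]
    have hM := Real.rpow_le_rpow (hnn _ _) claim hε0.le
    rw [Real.mul_rpow (by positivity) (Real.rpow_nonneg hT _)] at hM
    rw [← Real.rpow_mul hT, one_div, inv_mul_cancel₀ (ne_of_gt hε0), Real.rpow_one] at hM
    calc M (x 0) (x (k+1)) ^ ε ≤ (4 * C ^ 2) ^ ε * T := hM
      _ ≤ 2 * T := mul_le_mul_of_nonneg_right hpow hT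

/-- chain inequality for powers of a quasi-pseudodistance. -/
theorem stmt_0 {S : Type*} (M : S → S → ℝ) (C : ℝ) (hC : 1 < C)
    (hnn : ∀ x y, 0 ≤ M x y)
    (htri : ∀ x y z, M x y ≤ C * (M x z + M z y))
    (ε : ℝ) (hε0 : 0 < ε) (hε : ε ≤ Real.log 2 / (2 * Real.log (2 * C)))
    (k : ℕ) (x : Fin (k + 2) → S) :
    M (x 0) (x (Fin.last (k + 1))) ^ ε ≤
      2 * ∑ i : Fin (k + 1), M (x i.castSucc) (x i.succ) ^ ε := by
  have h2C : (1:ℝ) < 2 * C := by linarith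
  have hlog : 0 < Real.log (2 * C) := Real.log_pos h2C
  have hεlog : ε * (2 * Real.log (2 * C)) ≤ Real.log 2 :=
    (le_div_iff₀ (by positivity)).mp hε
  have hpow : (4 * C ^ 2 : ℝ) ^ ε ≤ 2 := by
    have h4 : (4 * C ^ 2 : ℝ) = (2 * C) ^ (2:ℕ) := by ring
    rw [h4, ← Real.rpow_natCast (2 * C) 2, ← Real.rpow_mul (by positivity)]
    rw [Real.rpow_def_of_pos (by positivity)]
    calc Real.exp (Real.log (2 * C) * ((2:ℕ) * ε)) ≤ Real.exp (Real.log 2) := by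
          apply Real.exp_le_exp.mpr
          push_cast
          nlinarith
      _ = 2 := Real.exp_log (by norm_num)
  -- extend x to ℕ → S
  set y : ℕ → S := fun n => x ⟨min n (k+1), by omega⟩ with hy
  have key := chain_aux M C hC hnn htri ε hε0 hpow k y
  have e0 : y 0 = x 0 := by
    apply congrArg x
    apply Fin.ext
    simp
  have eend : y (k+1) = x (Fin.last (k+1)) := by
    apply congrArg x
    apply Fin.ext
    simp [Fin.last]
  have esum : ∑ i : Fin (k+1), M (x i.castSucc) (x i.succ) ^ ε
      = ∑ i ∈ range (k+1), M (y i) (y (i+1)) ^ ε := by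
    rw [← Fin.sum_univ_eq_sum_range (fun n => M (y n) (y (n+1)) ^ ε) (k+1)]
    apply Finset.sum_congr rfl
    intro i _
    have hi := i.isLt
    have h1 : y (i : ℕ) = x i.castSucc := by
      apply congrArg x
      apply Fin.ext
      simp only [Fin.coe_castSucc]
      omega
    have h2 : y ((i : ℕ) + 1) = x i.succ := by
      apply congrArg x
      apply Fin.ext
      simp only [Fin.val_succ]
      omega
    rw [h1, h2]
  rw [e0, eend] at key
  rw [esum]
  exact key
end

section
/- Let $C > 1$ and suppose nonnegative real numbers $r_{ij}$ for $i,j \in \{1,2,3,4\}$ satisfy $r_{ij} \le C r_{ji}$ and $r_{ij} \le C(r_{ik} + r_{kj})$ for all $i,j,k$. Then $r_{12} r_{34} \le 4 C^4 \max(r_{13} r_{24},\ r_{14} r_{23})$. -/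
/-- Split lemma: from `a ≤ C*(u + C*v)` get one of the two dichotomy bounds. -/
lemma stmt_5_split (C a u v : ℝ) (hC : 1 < C) (hu : 0 ≤ u) (hv : 0 ≤ v)
    (h : a ≤ C * (u + C * v)) : a ≤ 2 * C ^ 2 * u ∨ a ≤ 2 * C ^ 2 * v := by
  have hC0 : (0:ℝ) ≤ C := le_of_lt (lt_trans zero_lt_one hC)
  rcases le_total u v with hle | hle
  · right
    nlinarith [mul_nonneg hC0 (by linarith : (0:ℝ) ≤ v - u),
      mul_nonneg (mul_nonneg hC0 hv) (by linarith : (0:ℝ) ≤ C - 1)]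
  · left
    nlinarith [mul_nonneg (pow_nonneg hC0 2) (by linarith : (0:ℝ) ≤ u - v),
      mul_nonneg (mul_nonneg hC0 hu) (by linarith : (0:ℝ) ≤ C - 1)]

set_option maxHeartbeats 2000000 in
/-- Abstract combinatorial core of the four-point lemma. -/
lemma stmt_5_core (C a b p q t s : ℝ) (hC : 1 < C)
    (ha : 0 ≤ a) (hb : 0 ≤ b)
    (hp : 0 ≤ p) (hq : 0 ≤ q) (ht : 0 ≤ t) (hs : 0 ≤ s)
    (D1 : a ≤ 2 * C ^ 2 * p ∨ a ≤ 2 * C ^ 2 * s)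
    (D2 : a ≤ 2 * C ^ 2 * t ∨ a ≤ 2 * C ^ 2 * q)
    (D3 : b ≤ 2 * C ^ 2 * p ∨ b ≤ 2 * C ^ 2 * t)
    (D4 : b ≤ 2 * C ^ 2 * s ∨ b ≤ 2 * C ^ 2 * q) :
    a * b ≤ 4 * C ^ 4 * max (p * q) (t * s) := by
  have hC0 : (0:ℝ) < C := lt_trans zero_lt_one hC
  have pos4 : (0:ℝ) ≤ 4 * C ^ 4 := by positivity
  have HX : 4 * C ^ 4 * (p * q) ≤ 4 * C ^ 4 * max (p * q) (t * s) :=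
    mul_le_mul_of_nonneg_left (le_max_left _ _) pos4
  have HY : 4 * C ^ 4 * (t * s) ≤ 4 * C ^ 4 * max (p * q) (t * s) :=
    mul_le_mul_of_nonneg_left (le_max_right _ _) pos4
  rcases D1 with h1 | h1 <;> rcases D2 with h2 | h2 <;>
    rcases D3 with h3 | h3 <;> rcases D4 with h4 | h4 <;>
  nlinarith [mul_le_mul h1 h4 hb (ha.trans h1), mul_le_mul h2 h3 hb (ha.trans h2),
    mul_le_mul h1 h3 hb (ha.trans h1), mul_le_mul h2 h4 hb (ha.trans h2),
    mul_le_mul h1 h2 ha (ha.trans h1), mul_le_mul h3 h4 hb (hb.trans h3),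
    sq_nonneg (a - b), HX, HY, mul_nonneg ha hb]

/-- algebraic four-point lemma for quasi-metric data.
Indices `0,1,2,3` play the roles of `1,2,3,4`. -/
theorem stmt_5 (C : ℝ) (hC : 1 < C) (r : Fin 4 → Fin 4 → ℝ)
    (hnn : ∀ i j, 0 ≤ r i j)
    (hsym : ∀ i j, r i j ≤ C * r j i)
    (htri : ∀ i j k, r i j ≤ C * (r i k + r k j)) :
    r 0 1 * r 2 3 ≤ 4 * C ^ 4 * max (r 0 2 * r 1 3) (r 0 3 * r 1 2) := by
  have hC0 : (0:ℝ) < C := lt_trans zero_lt_one hC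
  have D1 : r 0 1 ≤ 2 * C ^ 2 * r 0 2 ∨ r 0 1 ≤ 2 * C ^ 2 * r 1 2 := by
    apply stmt_5_split C _ _ _ hC (hnn 0 2) (hnn 1 2)
    have := htri 0 1 2
    have := hsym 2 1
    nlinarith [hnn 2 1]
  have D2 : r 0 1 ≤ 2 * C ^ 2 * r 0 3 ∨ r 0 1 ≤ 2 * C ^ 2 * r 1 3 := by
    apply stmt_5_split C _ _ _ hC (hnn 0 3) (hnn 1 3)
    have := htri 0 1 3
    have := hsym 3 1
    nlinarith [hnn 3 1]
  have D3 : r 2 3 ≤ 2 * C ^ 2 * r 0 3 ∨ r 2 3 ≤ 2 * C ^ 2 * r 0 2 := by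
    apply stmt_5_split C _ _ _ hC (hnn 0 3) (hnn 0 2)
    have := htri 2 3 0
    have := hsym 2 0
    nlinarith [hnn 2 0]
  have D4 : r 2 3 ≤ 2 * C ^ 2 * r 1 3 ∨ r 2 3 ≤ 2 * C ^ 2 * r 1 2 := by
    apply stmt_5_split C _ _ _ hC (hnn 1 3) (hnn 1 2)
    have := htri 2 3 1
    have := hsym 2 1
    nlinarith [hnn 2 1]
  exact stmt_5_core C (r 0 1) (r 2 3) (r 0 2) (r 1 3) (r 0 3) (r 1 2) hC
    (hnn 0 1) (hnn 2 3) (hnn 0 2) (hnn 1 3) (hnn 0 3) (hnn 1 2)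
    D1 D2 (D3.symm) (D4.symm)
end

section
/- Let $(X,d)$ be a geodesic metric space in which the Gromov product inequality $(x|y)_w \ge \min((x|z)_w, (z|y)_w) - C$ holds for all points $w,x,y,z$ in some subset $S$ containing a geodesic triangle $\triangle xyz$ (with all vertices and geodesic sides contained in $S$). Then every point $u$ on the side $[x,y]$ lies within distance $4C$ of $[x,z] \cup [y,z]$. -/
open Metric Set

/-- `γ` is a (unit speed) geodesic from `x` to `y`, parametrized on `[0, dist x y]`. -/
def IsGeodesic {X : Type*} [MetricSpace X] (x y : X) (γ : ℝ → X) : Prop :=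
  γ 0 = x ∧ γ (dist x y) = y ∧
    ∀ s ∈ Set.Icc (0 : ℝ) (dist x y), ∀ t ∈ Set.Icc (0 : ℝ) (dist x y),
      dist (γ s) (γ t) = |s - t|

/-- The image of a geodesic segment from `x` to `y`. -/
def geodImg {X : Type*} [MetricSpace X] (x y : X) (γ : ℝ → X) : Set X :=
  γ '' Set.Icc 0 (dist x y)

/-- The Gromov product `(x|y)_w`. -/
noncomputable def gromovProd {X : Type*} [MetricSpace X] (w x y : X) : ℝ :=
  (dist x w + dist y w - dist x y) / 2

lemma key {X : Type*} [MetricSpace X] (S : Set X) (C : ℝ) (hC : 0 ≤ C)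
    (hGP : ∀ w ∈ S, ∀ x ∈ S, ∀ y ∈ S, ∀ z ∈ S,
      gromovProd w x y ≥ min (gromovProd w x z) (gromovProd w z y) - C)
    (x y z : X) (hx : x ∈ S) (hy : y ∈ S) (hz : z ∈ S)
    (γxy γxz : ℝ → X) (hγxy : IsGeodesic x y γxy) (hγxz : IsGeodesic x z γxz)
    (hSxy : geodImg x y γxy ⊆ S) (hSxz : geodImg x z γxz ⊆ S)
    (t : ℝ) (ht : t ∈ Set.Icc 0 (dist x y)) (hcase : t ≤ gromovProd x y z) :
    ∃ v ∈ geodImg x z γxz, dist (γxy t) v ≤ 4 * C := by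
  obtain ⟨ht0, htd⟩ := ht
  have htz : t ∈ Set.Icc 0 (dist x z) := by
    constructor
    · exact ht0
    · have h1 : dist y x ≤ dist y z + dist z x := dist_triangle y z x
      have : gromovProd x y z ≤ dist x z := by
        unfold gromovProd; rw [dist_comm z x] at h1 ⊢; linarith
      linarith
  have h0d : (0:ℝ) ∈ Set.Icc 0 (dist x y) := ⟨le_refl _, dist_nonneg⟩
  have hdd : dist x y ∈ Set.Icc (0:ℝ) (dist x y) := ⟨dist_nonneg, le_refl _⟩
  have h0z : (0:ℝ) ∈ Set.Icc 0 (dist x z) := ⟨le_refl _, dist_nonneg⟩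
  have hdz : dist x z ∈ Set.Icc (0:ℝ) (dist x z) := ⟨dist_nonneg, le_refl _⟩
  set u := γxy t with hu
  set v := γxz t with hv
  have hux : dist u x = t := by
    have := hγxy.2.2 t ⟨ht0, htd⟩ 0 h0d
    rw [hγxy.1] at this; rw [this]; rw [sub_zero, abs_of_nonneg ht0]
  have huy : dist u y = dist x y - t := by
    have := hγxy.2.2 t ⟨ht0, htd⟩ (dist x y) hdd
    rw [hγxy.2.1] at this; rw [this, abs_of_nonpos (by linarith)]; ring
  have hvx : dist v x = t := by
    have := hγxz.2.2 t htz 0 h0z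
    rw [hγxz.1] at this; rw [this, sub_zero, abs_of_nonneg ht0]
  have hvz : dist v z = dist x z - t := by
    have := hγxz.2.2 t htz (dist x z) hdz
    rw [hγxz.2.1] at this; rw [this, abs_of_nonpos (by linarith [htz.2])]; ring
  have huS : u ∈ S := hSxy ⟨t, ⟨ht0, htd⟩, rfl⟩
  have hvS : v ∈ S := hSxz ⟨t, htz, rfl⟩
  -- (u|y)_x = t
  have huy' : gromovProd x u y = t := by
    unfold gromovProd; rw [hux, dist_comm y x, dist_comm u y] at *; rw [huy]; ring
  -- (z|v)_x = t
  have hzv' : gromovProd x z v = t := by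
    unfold gromovProd; rw [hvx, dist_comm z x, dist_comm z v, hvz]; ring
  -- (u|z)_x ≥ t - C
  have h1 : gromovProd x u z ≥ t - C := by
    have h := hGP x hx u huS z hz y hy
    rcases min_cases (gromovProd x u y) (gromovProd x y z) with ⟨he,_⟩|⟨he,_⟩ <;>
      rw [he] at h <;> linarith
  -- (u|v)_x ≥ t - 2C
  have h2 : gromovProd x u v ≥ t - 2*C := by
    have := hGP x hx u huS v hvS z hz
    rw [hzv'] at this
    rcases min_cases (gromovProd x u z) t with ⟨h,_⟩|⟨h,_⟩ <;> linarith
  have hfinal : dist u v ≤ 4 * C := by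
    have : gromovProd x u v = (t + t - dist u v) / 2 := by
      unfold gromovProd; rw [hux, hvx]
    rw [this] at h2; linarith
  exact ⟨v, ⟨t, htz, rfl⟩, hfinal⟩

/-- if the Gromov product inequality holds with constant `C` on a set `S`
containing a geodesic triangle (vertices and sides), then each point of the side `[x,y]`
is within distance `4C` of the union of the other two sides. -/
theorem stmt_6 {X : Type*} [MetricSpace X] (S : Set X) (C : ℝ) (hC : 0 ≤ C)
    (hGP : ∀ w ∈ S, ∀ x ∈ S, ∀ y ∈ S, ∀ z ∈ S,
      gromovProd w x y ≥ min (gromovProd w x z) (gromovProd w z y) - C)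
    (x y z : X) (hx : x ∈ S) (hy : y ∈ S) (hz : z ∈ S)
    (γxy γxz γyz : ℝ → X)
    (hγxy : IsGeodesic x y γxy) (hγxz : IsGeodesic x z γxz) (hγyz : IsGeodesic y z γyz)
    (hSxy : geodImg x y γxy ⊆ S) (hSxz : geodImg x z γxz ⊆ S)
    (hSyz : geodImg y z γyz ⊆ S) :
    ∀ u ∈ geodImg x y γxy, infDist u (geodImg x z γxz ∪ geodImg y z γyz) ≤ 4 * C := by
  rintro u ⟨t, ht, rfl⟩
  have hdxy : dist y x = dist x y := dist_comm y x
  have hsum : gromovProd x y z + gromovProd y x z = dist x y := by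
    unfold gromovProd
    rw [dist_comm y x, dist_comm z x, dist_comm z y, dist_comm x y]; ring
  by_cases hcase : t ≤ gromovProd x y z
  · obtain ⟨v, hvmem, hdv⟩ := key S C hC hGP x y z hx hy hz γxy γxz hγxy hγxz hSxy hSxz t ht hcase
    calc infDist (γxy t) (geodImg x z γxz ∪ geodImg y z γyz) ≤ dist (γxy t) v :=
          infDist_le_dist_of_mem (Set.mem_union_left _ hvmem)
      _ ≤ 4 * C := hdv
  · -- symmetric case: reverse γxy
    set γ' : ℝ → X := fun s => γxy (dist x y - s) with hγ'
    have hγ'geo : IsGeodesic y x γ' := by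
      refine ⟨?_, ?_, ?_⟩
      · show γxy (dist x y - 0) = y
        rw [sub_zero]; exact hγxy.2.1
      · show γxy (dist x y - dist y x) = x
        rw [hdxy, sub_self]; exact hγxy.1
      · intro s hs t' ht'
        rw [hdxy] at hs ht'
        have := hγxy.2.2 (dist x y - s) ⟨by linarith [hs.2], by linarith [hs.1]⟩
          (dist x y - t') ⟨by linarith [ht'.2], by linarith [ht'.1]⟩
        simpa [abs_sub_comm] using this
    have hS' : geodImg y x γ' ⊆ S := by
      rintro _ ⟨s, hs, rfl⟩
      rw [hdxy] at hs
      exact hSxy ⟨dist x y - s, ⟨by linarith [hs.2], by linarith [hs.1]⟩, rfl⟩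
    have hcase' : dist x y - t ≤ gromovProd y x z := by
      push_neg at hcase; linarith
    have htmem : dist x y - t ∈ Set.Icc 0 (dist y x) := by
      rw [hdxy]; exact ⟨by linarith [ht.2], by linarith [ht.1]⟩
    obtain ⟨v, hvmem, hdv⟩ := key S C hC hGP y x z hy hx hz γ' γyz hγ'geo hγyz hS' hSyz
      (dist x y - t) htmem hcase'
    have hvu : γ' (dist x y - t) = γxy t := by
      show γxy (dist x y - (dist x y - t)) = γxy t
      congr 1; ring
    rw [hvu] at hdv
    calc infDist (γxy t) (geodImg x z γxz ∪ geodImg y z γyz) ≤ dist (γxy t) v :=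
          infDist_le_dist_of_mem (Set.mem_union_right _ hvmem)
      _ ≤ 4 * C := hdv
end

section
/- Let $\Omega \subset \mathbb{C}^n$ be a convex open set. For all $x, y \in \Omega$, $K_\Omega(x,y) \ge \frac{1}{2} \left| \log \frac{\delta_\Omega(x)}{\delta_\Omega(y)} \right|$, where $K_\Omega$ is the Kobayashi distance and $\delta_\Omega(x) = \mathrm{dist}(x, \partial\Omega)$. -/
open Metric Set MeasureTheory intervalIntegral

set_option maxHeartbeats 1000000

/-- The infinitesimal Kobayashi pseudometric of `Ω ⊆ ℂⁿ`. -/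
noncomputable def kobMetric {n : ℕ} (Ω : Set (EuclideanSpace ℂ (Fin n)))
    (x v : EuclideanSpace ℂ (Fin n)) : ℝ :=
  sInf {r : ℝ | ∃ f : ℂ → EuclideanSpace ℂ (Fin n),
    DifferentiableOn ℂ f (ball (0 : ℂ) 1) ∧ MapsTo f (ball (0 : ℂ) 1) Ω ∧ f 0 = x ∧
    ∃ ξ : ℂ, ξ • derivWithin f (ball (0 : ℂ) 1) 0 = v ∧ r = ‖ξ‖}

namespace KobAux

variable {n : ℕ}

noncomputable local instance : MeasurableSpace (EuclideanSpace ℂ (Fin n)) := borel _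
local instance : BorelSpace (EuclideanSpace ℂ (Fin n)) := ⟨rfl⟩

/-- The defining set of the Kobayashi metric. -/
def kobSet (Ω : Set (EuclideanSpace ℂ (Fin n))) (x v : EuclideanSpace ℂ (Fin n)) : Set ℝ :=
  {r : ℝ | ∃ f : ℂ → EuclideanSpace ℂ (Fin n),
    DifferentiableOn ℂ f (ball (0 : ℂ) 1) ∧ MapsTo f (ball (0 : ℂ) 1) Ω ∧ f 0 = x ∧
    ∃ ξ : ℂ, ξ • derivWithin f (ball (0 : ℂ) 1) 0 = v ∧ r = ‖ξ‖}

lemma kobMetric_eq (Ω : Set (EuclideanSpace ℂ (Fin n))) (x v : EuclideanSpace ℂ (Fin n)) :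
    kobMetric Ω x v = sInf (kobSet Ω x v) := rfl

lemma kobSet_nonneg {Ω : Set (EuclideanSpace ℂ (Fin n))} {x v : EuclideanSpace ℂ (Fin n)}
    {r : ℝ} (hr : r ∈ kobSet Ω x v) : 0 ≤ r := by
  obtain ⟨f, _, _, _, ξ, _, rfl⟩ := hr
  positivity

lemma kobSet_bddBelow (Ω : Set (EuclideanSpace ℂ (Fin n))) (x v : EuclideanSpace ℂ (Fin n)) :
    BddBelow (kobSet Ω x v) := ⟨0, fun _ hr => kobSet_nonneg hr⟩

lemma kob_nonneg (Ω : Set (EuclideanSpace ℂ (Fin n))) (x v : EuclideanSpace ℂ (Fin n)) :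
    0 ≤ kobMetric Ω x v :=
  Real.sInf_nonneg (fun _ hr => kobSet_nonneg hr)

lemma mem_kobSet_of_ball {Ω : Set (EuclideanSpace ℂ (Fin n))} {z : EuclideanSpace ℂ (Fin n)}
    {r : ℝ} (hr : 0 < r) (hball : ball z r ⊆ Ω) (v : EuclideanSpace ℂ (Fin n)) :
    (‖v‖ / r) ∈ kobSet Ω z v := by
  rcases eq_or_ne v 0 with rfl | hv
  · refine ⟨fun _ => z, differentiableOn_const _, fun w hw => hball (by simpa using hr), rfl,
      0, by simp, by simp⟩
  · have hvn : (0:ℝ) < ‖v‖ := norm_pos_iff.mpr hv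
    set u : EuclideanSpace ℂ (Fin n) := ((r / ‖v‖ : ℝ) : ℂ) • v with hu
    refine ⟨fun w => z + w • u, ?_, ?_, by simp, ((‖v‖ / r : ℝ) : ℂ), ?_, ?_⟩
    · exact (differentiable_const z |>.add ((differentiable_id.smul_const u))).differentiableOn
    · intro w hw
      apply hball
      rw [mem_ball, dist_self_add_left]
      rw [mem_ball, dist_zero_right] at hw
      have hnu : ‖u‖ = r := by
        rw [hu, norm_smul, Complex.norm_real, Real.norm_eq_abs,
          abs_of_pos (div_pos hr hvn), div_mul_cancel₀ _ hvn.ne']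
      rw [norm_smul, hnu]
      calc ‖w‖ * r < 1 * r := mul_lt_mul_of_pos_right hw hr
        _ = r := one_mul r
    · have hd : HasDerivAt (fun w : ℂ => z + w • u) u 0 := by
        simpa using (hasDerivAt_id (0:ℂ)).smul_const u |>.const_add z
      rw [(hd.hasDerivWithinAt.derivWithin (isOpen_ball.uniqueDiffWithinAt (by simp)))]
      rw [hu, smul_smul, ← Complex.ofReal_mul, div_mul_div_comm,
        mul_comm (‖v‖) r, div_self (by positivity), Complex.ofReal_one, one_smul]
    · rw [Complex.norm_real, Real.norm_eq_abs, abs_of_nonneg (by positivity)]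

lemma kob_le_of_ball {Ω : Set (EuclideanSpace ℂ (Fin n))} {z : EuclideanSpace ℂ (Fin n)}
    {r : ℝ} (hr : 0 < r) (hball : ball z r ⊆ Ω) (v : EuclideanSpace ℂ (Fin n)) :
    kobMetric Ω z v ≤ ‖v‖ / r :=
  csInf_le (kobSet_bddBelow Ω z v) (mem_kobSet_of_ball hr hball v)

lemma kobSet_nonempty {Ω : Set (EuclideanSpace ℂ (Fin n))} (hopen : IsOpen Ω)
    {z : EuclideanSpace ℂ (Fin n)} (hz : z ∈ Ω) (v : EuclideanSpace ℂ (Fin n)) :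
    (kobSet Ω z v).Nonempty := by
  obtain ⟨r, hr, hball⟩ := Metric.isOpen_iff.mp hopen z hz
  exact ⟨_, mem_kobSet_of_ball hr hball v⟩

lemma schwarz_halfplane {g : ℂ → ℂ} (hg : DifferentiableOn ℂ g (ball (0:ℂ) 1))
    (hm : ∀ w ∈ ball (0:ℂ) 1, (g w).re < 0) :
    ‖deriv g 0‖ ≤ 2 * (-(g 0).re) := by
  set A : ℂ := g 0 with hA
  have hA0 : A.re < 0 := hm 0 (by simp)
  have hden : ∀ w ∈ ball (0:ℂ) 1, g w + (starRingEnd ℂ) A ≠ 0 := by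
    intro w hw h0
    have h1 : (g w + (starRingEnd ℂ) A).re = (g w).re + A.re := by
      simp [Complex.add_re, Complex.conj_re]
    rw [h0] at h1
    have := hm w hw
    simp at h1; linarith
  set h : ℂ → ℂ := fun w => (g w - A) / (g w + (starRingEnd ℂ) A) with hh
  have hdh : DifferentiableOn ℂ h (ball (0:ℂ) 1) :=
    DifferentiableOn.div (hg.sub_const A) (hg.add_const _) hden
  have hh0 : h 0 = 0 := by simp [hh, hA]
  have hmaps : MapsTo h (ball (0:ℂ) 1) (ball (h 0) 1) := by
    intro w hw
    rw [hh0, mem_ball, dist_zero_right, hh]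
    have hd0 := hden w hw
    have hgw := hm w hw
    have key : Complex.normSq (g w - A) < Complex.normSq (g w + (starRingEnd ℂ) A) := by
      simp only [Complex.normSq_apply, Complex.sub_re, Complex.sub_im, Complex.add_re,
        Complex.add_im, Complex.conj_re, Complex.conj_im]
      nlinarith [hgw, hA0]
    have h2 : ‖g w - A‖ < ‖g w + (starRingEnd ℂ) A‖ := by
      have := Real.sqrt_lt_sqrt (Complex.normSq_nonneg _) key
      simpa [Complex.norm_def] using this
    rw [norm_div]
    have hpos : 0 < ‖g w + (starRingEnd ℂ) A‖ := by
      simpa using norm_pos_iff.mpr hd0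
    rw [div_lt_one hpos]
    exact h2
  have hschwarz : ‖deriv h 0‖ ≤ 1 := by
    have := Complex.norm_deriv_le_div_of_mapsTo_ball hdh (hmaps.mono_right ball_subset_closedBall) one_pos
    simpa using this
  -- compute deriv h 0
  have hgd : HasDerivAt g (deriv g 0) 0 :=
    (hg.differentiableAt (isOpen_ball.mem_nhds (by simp))).hasDerivAt
  have hdenne : A + (starRingEnd ℂ) A ≠ 0 := hden 0 (by simp)
  have hhd : HasDerivAt h
      ((deriv g 0 * (A + (starRingEnd ℂ) A) - (A - A) * deriv g 0) /
        (A + (starRingEnd ℂ) A) ^ 2) 0 := by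
    have h1 : HasDerivAt (fun w => g w - A) (deriv g 0) 0 := hgd.sub_const A
    have h2 : HasDerivAt (fun w => g w + (starRingEnd ℂ) A) (deriv g 0) 0 :=
      hgd.add_const _
    exact h1.div h2 hdenne
  have hderiv_h : deriv h 0 = deriv g 0 / (A + (starRingEnd ℂ) A) := by
    rw [hhd.deriv]
    field_simp
    ring
  rw [hderiv_h] at hschwarz
  have habs : ‖A + (starRingEnd ℂ) A‖ = 2 * (-A.re) := by
    rw [Complex.add_conj, Complex.norm_real, Real.norm_eq_abs]
    rw [abs_of_nonpos (by linarith)]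
    ring
  rw [norm_div, habs, div_le_one (by linarith)] at hschwarz
  simpa using hschwarz

lemma re_extend (ℓ : EuclideanSpace ℂ (Fin n) →L[ℝ] ℝ) (x : EuclideanSpace ℂ (Fin n)) :
    ((ContinuousLinearMap.extendTo𝕜' ℓ : EuclideanSpace ℂ (Fin n) →L[ℂ] ℂ) x).re = ℓ x := by
  have h := ℓ.toLinearMap.extendTo𝕜'_apply_re (𝕜 := ℂ) x
  rw [RCLike.re_to_complex] at h
  exact h

lemma kob_lower {Ω : Set (EuclideanSpace ℂ (Fin n))} (hopen : IsOpen Ω)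
    {ℓ : EuclideanSpace ℂ (Fin n) →L[ℝ] ℝ} {c : ℝ} (hsep : ∀ w ∈ Ω, ℓ w < c)
    {z v : EuclideanSpace ℂ (Fin n)} (hz : z ∈ Ω) :
    |ℓ v| ≤ 2 * (c - ℓ z) * kobMetric Ω z v := by
  set Λ : EuclideanSpace ℂ (Fin n) →L[ℂ] ℂ := ContinuousLinearMap.extendTo𝕜' ℓ with hΛ
  have hre : ∀ w, (Λ w).re = ℓ w := fun w => re_extend ℓ w
  have hczpos : (0:ℝ) < c - ℓ z := sub_pos.mpr (hsep z hz)
  have key : ∀ r ∈ kobSet Ω z v, |ℓ v| / (2 * (c - ℓ z)) ≤ r := by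
    rintro r ⟨f, hdf, hmf, hf0, ξ, hξ, rfl⟩
    set d := derivWithin f (ball (0:ℂ) 1) 0 with hd
    set g : ℂ → ℂ := fun w => Λ (f w) - (c : ℂ) with hg
    have hdg : DifferentiableOn ℂ g (ball (0:ℂ) 1) :=
      (Λ.differentiable.comp_differentiableOn hdf).sub_const _
    have hmg : ∀ w ∈ ball (0:ℂ) 1, (g w).re < 0 := by
      intro w hw
      have := hsep _ (hmf hw)
      simp only [hg, Complex.sub_re, hre, Complex.ofReal_re]
      linarith
    have hs := schwarz_halfplane hdg hmg
    have hg0 : (g 0).re = ℓ z - c := by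
      simp [hg, Complex.sub_re, hre, Complex.ofReal_re, hf0]
    have hfd : HasDerivAt f d 0 := by
      have h1 : DifferentiableAt ℂ f 0 := hdf.differentiableAt (isOpen_ball.mem_nhds (by simp))
      have h2 : derivWithin f (ball (0:ℂ) 1) 0 = deriv f 0 :=
        derivWithin_of_isOpen isOpen_ball (by simp)
      rw [hd, h2]
      exact h1.hasDerivAt
    have hgd : HasDerivAt g (Λ d) 0 := (Λ.hasFDerivAt.comp_hasDerivAt 0 hfd).sub_const _
    rw [hgd.deriv, hg0] at hs
    have hs' : ‖Λ d‖ ≤ 2 * (c - ℓ z) := by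
      calc ‖Λ d‖ ≤ 2 * (-(ℓ z - c)) := hs
        _ = 2 * (c - ℓ z) := by ring
    have hΛv : ‖Λ v‖ = ‖ξ‖ * ‖Λ d‖ := by
      rw [← hξ, _root_.map_smul, norm_smul]
    rw [div_le_iff₀ (by linarith)]
    calc |ℓ v| = |(Λ v).re| := by rw [hre]
      _ ≤ ‖Λ v‖ := Complex.abs_re_le_norm (Λ v)
      _ = ‖ξ‖ * ‖Λ d‖ := hΛv
      _ ≤ ‖ξ‖ * (2 * (c - ℓ z)) := by
          exact mul_le_mul_of_nonneg_left hs' (norm_nonneg ξ)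
  have hle := le_csInf (kobSet_nonempty hopen hz v) key
  rw [div_le_iff₀ (by linarith)] at hle
  calc |ℓ v| ≤ sInf (kobSet Ω z v) * (2 * (c - ℓ z)) := hle
    _ = 2 * (c - ℓ z) * kobMetric Ω z v := by rw [kobMetric_eq]; ring

lemma kob_usc {Ω : Set (EuclideanSpace ℂ (Fin n))} (hopen : IsOpen Ω)
    {z v : EuclideanSpace ℂ (Fin n)} (hz : z ∈ Ω) {c : ℝ} (hc : kobMetric Ω z v < c) :
    ∃ ε > 0, ∀ z' v' : EuclideanSpace ℂ (Fin n),
      dist z' z < ε → dist v' v < ε → kobMetric Ω z' v' < c := by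
  obtain ⟨r, hrS, hrc⟩ := exists_lt_of_csInf_lt (kobSet_nonempty hopen hz v) hc
  obtain ⟨f, hdf, hmf, hf0, ξ, hξ, rfl⟩ := hrS
  set d := derivWithin f (ball (0:ℂ) 1) 0 with hd
  by_cases hξ0 : ξ = 0
  · -- then `v = 0`; use the trivial upper bound
    have hv : v = 0 := by rw [← hξ, hξ0, zero_smul]
    have hcpos : (0:ℝ) < c := lt_of_le_of_lt (by simp [hξ0]) hrc
    obtain ⟨r₀, hr₀, hball⟩ := Metric.isOpen_iff.mp hopen z hz
    refine ⟨min (r₀ / 2) (c * (r₀ / 2) / 2), by positivity, fun z' v' hz' hv' => ?_⟩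
    have hball' : ball z' (r₀ / 2) ⊆ Ω := by
      intro q hq
      apply hball
      rw [mem_ball] at *
      calc dist q z ≤ dist q z' + dist z' z := dist_triangle _ _ _
        _ < r₀ / 2 + min (r₀ / 2) (c * (r₀ / 2) / 2) := by
            exact add_lt_add hq hz'
        _ ≤ r₀ / 2 + r₀ / 2 := by
            exact add_le_add le_rfl (min_le_left _ _)
        _ = r₀ := by ring
    have h1 : kobMetric Ω z' v' ≤ ‖v'‖ / (r₀ / 2) := kob_le_of_ball (by positivity) hball' v'
    have h2 : ‖v'‖ < c * (r₀ / 2) / 2 := by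
      have : dist v' v = ‖v'‖ := by rw [hv, dist_zero_right]
      rw [this] at hv'
      exact lt_of_lt_of_le hv' (min_le_right _ _)
    calc kobMetric Ω z' v' ≤ ‖v'‖ / (r₀ / 2) := h1
      _ < c * (r₀ / 2) / 2 / (r₀ / 2) := by
          exact div_lt_div_of_pos_right h2 (by positivity)
      _ ≤ c := by
          rw [div_le_iff₀ (by positivity)]
          nlinarith
  · -- main case
    have hξn : (0:ℝ) < ‖ξ‖ := norm_pos_iff.mpr hξ0
    have hcpos : (0:ℝ) < c := lt_of_le_of_lt (norm_nonneg ξ) hrc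
    -- choose ρ ∈ (‖ξ‖/c, 1)
    set ρ : ℝ := (‖ξ‖ / c + 1) / 2 with hρ
    have hρ0 : 0 < ρ := by positivity
    have hρ1 : ρ < 1 := by
      have : ‖ξ‖ / c < 1 := (div_lt_one hcpos).mpr hrc
      rw [hρ]; linarith
    have hρξ : ‖ξ‖ / ρ < c := by
      rw [div_lt_iff₀ hρ0, hρ]
      have h' : ‖ξ‖ / c < 1 := (div_lt_one hcpos).mpr hrc
      have : ‖ξ‖ = (‖ξ‖ / c) * c := by field_simp
      nlinarith
    -- compact image and thickening
    have hsub : closedBall (0:ℂ) ρ ⊆ ball (0:ℂ) 1 := by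
      intro w hw
      rw [mem_closedBall_zero_iff] at hw
      rw [mem_ball, dist_zero_right]
      exact lt_of_le_of_lt hw hρ1
    have hK : IsCompact (f '' closedBall (0:ℂ) ρ) :=
      (isCompact_closedBall (0:ℂ) ρ).image_of_continuousOn (hdf.continuousOn.mono hsub)
    have hKΩ : f '' closedBall (0:ℂ) ρ ⊆ Ω := by
      rintro _ ⟨w, hw, rfl⟩
      exact hmf (hsub hw)
    obtain ⟨η, hη, hthick⟩ := hK.exists_thickening_subset_open hopen hKΩ
    -- choose ε
    refine ⟨min (η / 2) (η * ‖ξ‖ / 2), by positivity, fun z' v' hz' hv' => ?_⟩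
    rw [dist_eq_norm] at hz' hv'
    -- the perturbed competitor
    set ξ' : ℂ := (ρ : ℂ)⁻¹ * ξ with hξ'
    have hρℂ : (ρ : ℂ) ≠ 0 := by
      simpa using hρ0.ne'
    have hξ'0 : ξ' ≠ 0 := mul_ne_zero (inv_ne_zero hρℂ) hξ0
    set u : EuclideanSpace ℂ (Fin n) := ξ'⁻¹ • (v' - v) with hu
    have hnu : ‖u‖ ≤ ρ * ‖v' - v‖ / ‖ξ‖ := by
      rw [hu, norm_smul, norm_inv, hξ', norm_mul, norm_inv, Complex.norm_real,
        Real.norm_eq_abs, abs_of_pos hρ0]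
      rw [mul_inv, inv_inv]
      rw [div_eq_mul_inv, mul_comm ρ ‖v' - v‖, mul_assoc]
      exact le_of_eq (by ring)
    have hnu' : ‖u‖ < η / 2 := by
      have hv2 : ‖v' - v‖ < η * ‖ξ‖ / 2 := lt_of_lt_of_le hv' (min_le_right _ _)
      have hkey : ρ * ‖v' - v‖ / ‖ξ‖ < η / 2 := by
        rw [div_lt_iff₀ hξn]
        nlinarith [norm_nonneg (v' - v)]
      exact lt_of_le_of_lt hnu hkey
    set g : ℂ → EuclideanSpace ℂ (Fin n) :=
      fun w => f ((ρ : ℂ) * w) + ((z' - z) + w • u) with hgdef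
    have hin : ∀ w ∈ ball (0:ℂ) 1, (ρ : ℂ) * w ∈ ball (0:ℂ) 1 := by
      intro w hw
      rw [mem_ball, dist_zero_right] at *
      rw [norm_mul, Complex.norm_real, Real.norm_eq_abs, abs_of_pos hρ0]
      nlinarith
    have hdg : DifferentiableOn ℂ g (ball (0:ℂ) 1) := by
      rw [hgdef]
      apply DifferentiableOn.add
      · exact (hdf.comp ((differentiable_id.const_mul _).differentiableOn) hin)
      · exact (differentiable_const _ |>.add (differentiable_id.smul_const u)).differentiableOn
    have hmg : MapsTo g (ball (0:ℂ) 1) Ω := by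
      intro w hw
      apply hthick
      rw [mem_thickening_iff]
      refine ⟨f ((ρ : ℂ) * w), ⟨(ρ : ℂ) * w, ?_, rfl⟩, ?_⟩
      · rw [mem_closedBall_zero_iff, norm_mul, Complex.norm_real, Real.norm_eq_abs,
          abs_of_pos hρ0]
        rw [mem_ball, dist_zero_right] at hw
        nlinarith
      · rw [hgdef]
        simp only [dist_eq_norm, add_sub_cancel_left]
        calc ‖z' - z + w • u‖ ≤ ‖z' - z‖ + ‖w • u‖ := norm_add_le _ _
          _ ≤ ‖z' - z‖ + ‖u‖ := by
              rw [norm_smul]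
              have : ‖w‖ ≤ 1 := le_of_lt (by rw [mem_ball, dist_zero_right] at hw; exact hw)
              nlinarith [norm_nonneg u]
          _ < η / 2 + η / 2 := add_lt_add (lt_of_lt_of_le hz' (min_le_left _ _)) hnu'
          _ = η := by ring
    have hg0 : g 0 = z' := by
      rw [hgdef]; simp [hf0]
    -- derivative of g at 0
    have hfd : HasDerivAt f d 0 := by
      have h1 : DifferentiableAt ℂ f 0 := hdf.differentiableAt (isOpen_ball.mem_nhds (by simp))
      have h2 : derivWithin f (ball (0:ℂ) 1) 0 = deriv f 0 :=
        derivWithin_of_isOpen isOpen_ball (by simp)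
      rw [hd, h2]
      exact h1.hasDerivAt
    have hcomp : HasDerivAt (fun w : ℂ => f ((ρ : ℂ) * w)) ((ρ : ℂ) • d) 0 := by
      have hl : HasDerivAt (fun w : ℂ => (ρ : ℂ) * w) (ρ : ℂ) 0 := by
        simpa using (hasDerivAt_id (0:ℂ)).const_mul (ρ : ℂ)
      have := HasDerivAt.scomp (𝕜 := ℂ) 0 (by simpa using hfd) hl
      exact this
    have hgd : HasDerivAt g ((ρ : ℂ) • d + u) 0 := by
      apply hcomp.add
      simpa using ((hasDerivAt_id (0:ℂ)).smul_const u).const_add (z' - z)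
    have hmem : ‖ξ'‖ ∈ kobSet Ω z' v' := by
      refine ⟨g, hdg, hmg, hg0, ξ', ?_, rfl⟩
      rw [hgd.hasDerivWithinAt.derivWithin (isOpen_ball.uniqueDiffWithinAt (by simp))]
      rw [smul_add, hu, smul_inv_smul₀ hξ'0, hξ', smul_smul]
      rw [mul_comm ((ρ:ℂ))⁻¹ ξ, mul_assoc, inv_mul_cancel₀ hρℂ, mul_one, hξ]
      abel
    have hnorm : ‖ξ'‖ = ‖ξ‖ / ρ := by
      rw [hξ', norm_mul, norm_inv, Complex.norm_real, Real.norm_eq_abs, abs_of_pos hρ0]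
      ring
    calc kobMetric Ω z' v' ≤ ‖ξ'‖ := csInf_le (kobSet_bddBelow Ω z' v') hmem
      _ = ‖ξ‖ / ρ := hnorm
      _ < c := hρξ

lemma kob_integrable {Ω : Set (EuclideanSpace ℂ (Fin n))} (hopen : IsOpen Ω)
    {σ : ℝ → EuclideanSpace ℂ (Fin n)} {a b : ℝ}
    (hab : a ≤ b) (hσ : ContDiffOn ℝ 1 σ (Icc a b)) (hmap : MapsTo σ (Icc a b) Ω) :
    IntervalIntegrable (fun t => kobMetric Ω (σ t) (deriv σ t)) volume a b := by
  classical
  rcases eq_or_lt_of_le hab with rfl | hab'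
  · exact IntervalIntegrable.refl
  set K' : (EuclideanSpace ℂ (Fin n) × EuclideanSpace ℂ (Fin n)) → ℝ :=
    fun p => if p.1 ∈ Ω then kobMetric Ω p.1 p.2 else 0 with hK'
  have hU : ∀ c : ℝ, IsOpen {p : EuclideanSpace ℂ (Fin n) × EuclideanSpace ℂ (Fin n) |
      p.1 ∈ Ω ∧ kobMetric Ω p.1 p.2 < c} := by
    intro c
    rw [Metric.isOpen_iff]
    rintro ⟨z, v⟩ ⟨hz, hk⟩
    obtain ⟨ε₁, hε₁, hb⟩ := Metric.isOpen_iff.mp hopen z hz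
    obtain ⟨ε₂, hε₂, husc⟩ := kob_usc hopen hz hk
    refine ⟨min ε₁ ε₂, lt_min hε₁ hε₂, ?_⟩
    rintro ⟨z', v'⟩ hq
    rw [mem_ball, Prod.dist_eq, max_lt_iff] at hq
    refine ⟨hb (mem_ball.mpr (lt_of_lt_of_le hq.1 (min_le_left _ _))),
      husc z' v' (lt_of_lt_of_le hq.1 (min_le_right _ _))
        (lt_of_lt_of_le hq.2 (min_le_right _ _))⟩
  have hK'm : Measurable K' := by
    apply measurable_of_Iio
    intro c
    have hset : K' ⁻¹' Iio c =
        {p : EuclideanSpace ℂ (Fin n) × EuclideanSpace ℂ (Fin n) |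
          p.1 ∈ Ω ∧ kobMetric Ω p.1 p.2 < c} ∪
        ((fun p : EuclideanSpace ℂ (Fin n) × EuclideanSpace ℂ (Fin n) => p.1) ⁻¹' Ωᶜ ∩
          {_p | (0:ℝ) < c}) := by
      ext p
      by_cases hp : p.1 ∈ Ω <;> simp [hK', hp]
    rw [hset]
    apply MeasurableSet.union (hU c).measurableSet
    apply MeasurableSet.inter
    · exact hopen.isClosed_compl.measurableSet.preimage measurable_fst
    · by_cases hc : (0:ℝ) < c
      · simp [hc]
      · simp [hc]
  rw [intervalIntegrable_iff_integrableOn_Icc_of_le hab]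
  have hσc : ContinuousOn σ (Icc a b) := hσ.continuousOn
  set F : ℝ → EuclideanSpace ℂ (Fin n) × EuclideanSpace ℂ (Fin n) :=
    fun t => (σ t, deriv σ t) with hF
  have haesF : AEMeasurable F (volume.restrict (Icc a b)) :=
    (hσc.aemeasurable measurableSet_Icc).prodMk (measurable_deriv σ).aemeasurable
  have haeeq : (fun t => kobMetric Ω (σ t) (deriv σ t)) =ᵐ[volume.restrict (Icc a b)]
      (fun t => K' (F t)) := by
    filter_upwards [ae_restrict_mem measurableSet_Icc] with t ht
    simp [hK', hF, hmap ht]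
  have haes : AEStronglyMeasurable (fun t => kobMetric Ω (σ t) (deriv σ t))
      (volume.restrict (Icc a b)) := by
    refine AEStronglyMeasurable.congr ?_ haeeq.symm
    exact (hK'm.comp_aemeasurable haesF).aestronglyMeasurable
  -- uniform bound
  have hKc : IsCompact (σ '' Icc a b) := isCompact_Icc.image_of_continuousOn hσc
  have hKΩ : σ '' Icc a b ⊆ Ω := image_subset_iff.mpr hmap
  obtain ⟨r₀, hr₀, hthick⟩ := hKc.exists_thickening_subset_open hopen hKΩ
  have hball : ∀ t ∈ Icc a b, ball (σ t) r₀ ⊆ Ω := by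
    intro t ht q hq
    exact hthick (mem_thickening_iff.mpr ⟨σ t, mem_image_of_mem σ ht, mem_ball.mp hq⟩)
  have hcd : ContinuousOn (derivWithin σ (Icc a b)) (Icc a b) :=
    hσ.continuousOn_derivWithin (uniqueDiffOn_Icc hab') le_rfl
  obtain ⟨M, hM⟩ := isCompact_Icc.exists_bound_of_continuousOn hcd
  have hbound : ∀ᵐ t ∂(volume.restrict (Icc a b)),
      ‖kobMetric Ω (σ t) (deriv σ t)‖ ≤ M / r₀ := by
    have hne_a : ∀ᵐ t ∂(volume.restrict (Icc a b)), t ≠ a :=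
      ae_restrict_of_ae (ae_iff.mpr (by simp [Real.volume_singleton]))
    have hne_b : ∀ᵐ t ∂(volume.restrict (Icc a b)), t ≠ b :=
      ae_restrict_of_ae (ae_iff.mpr (by simp [Real.volume_singleton]))
    filter_upwards [ae_restrict_mem measurableSet_Icc, hne_a, hne_b] with t ht hta htb
    have htoo : t ∈ Ioo a b := ⟨lt_of_le_of_ne ht.1 (Ne.symm hta), lt_of_le_of_ne ht.2 htb⟩
    have hder : deriv σ t = derivWithin σ (Icc a b) t :=
      (derivWithin_of_mem_nhds (Icc_mem_nhds htoo.1 htoo.2)).symm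
    have h1 : kobMetric Ω (σ t) (deriv σ t) ≤ ‖deriv σ t‖ / r₀ :=
      kob_le_of_ball hr₀ (hball t ht) _
    have h2 : ‖deriv σ t‖ ≤ M := hder ▸ hM t ht
    rw [Real.norm_eq_abs, abs_of_nonneg (kob_nonneg Ω _ _)]
    calc kobMetric Ω (σ t) (deriv σ t) ≤ ‖deriv σ t‖ / r₀ := h1
      _ ≤ M / r₀ := by gcongr
  exact Integrable.mono' (integrableOn_const measure_Icc_lt_top.ne) haes hbound

lemma curve_bound {Ω : Set (EuclideanSpace ℂ (Fin n))} (hopen : IsOpen Ω)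
    {ℓ : EuclideanSpace ℂ (Fin n) →L[ℝ] ℝ} {c : ℝ} (hsep : ∀ w ∈ Ω, ℓ w < c)
    {σ : ℝ → EuclideanSpace ℂ (Fin n)} {a b : ℝ} (hab : a ≤ b)
    (hσ : ContDiffOn ℝ 1 σ (Icc a b)) (hmap : MapsTo σ (Icc a b) Ω) :
    |Real.log (c - ℓ (σ b)) - Real.log (c - ℓ (σ a))| ≤
      2 * ∫ t in a..b, kobMetric Ω (σ t) (deriv σ t) := by
  rcases eq_or_lt_of_le hab with rfl | hab'
  · have h1 : (0:ℝ) ≤ 2 * ∫ t in a..a, kobMetric Ω (σ t) (deriv σ t) := by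
      simp
    simpa using h1
  have hupos : ∀ t ∈ Icc a b, 0 < c - ℓ (σ t) := fun t ht => sub_pos.mpr (hsep _ (hmap ht))
  set ψ : ℝ → ℝ := fun t => -(ℓ (derivWithin σ (Icc a b) t)) / (c - ℓ (σ t)) with hψ
  have hcd : ContinuousOn (derivWithin σ (Icc a b)) (Icc a b) :=
    hσ.continuousOn_derivWithin (uniqueDiffOn_Icc hab') le_rfl
  have hσc : ContinuousOn σ (Icc a b) := hσ.continuousOn
  have hψc : ContinuousOn ψ (Icc a b) := by
    apply ContinuousOn.div
    · exact (ℓ.continuous.comp_continuousOn hcd).neg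
    · exact continuousOn_const.sub (ℓ.continuous.comp_continuousOn hσc)
    · exact fun t ht => (hupos t ht).ne'
  have hψint : IntervalIntegrable ψ volume a b := hψc.intervalIntegrable_of_Icc hab
  have hφc : ContinuousOn (fun t => Real.log (c - ℓ (σ t))) (Icc a b) := by
    apply ContinuousOn.log
    · exact continuousOn_const.sub (ℓ.continuous.comp_continuousOn hσc)
    · exact fun t ht => (hupos t ht).ne'
  have hderiv : ∀ t ∈ Ioo a b, HasDerivAt (fun t => Real.log (c - ℓ (σ t))) (ψ t) t := by
    intro t ht
    have hdd : DifferentiableAt ℝ σ t :=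
      (hσ.differentiableOn one_ne_zero).differentiableAt (Icc_mem_nhds ht.1 ht.2)
    have hσd : HasDerivAt σ (deriv σ t) t := hdd.hasDerivAt
    have hl : HasDerivAt (fun t => c - ℓ (σ t)) (-(ℓ (deriv σ t))) t := by
      simpa using (ℓ.hasFDerivAt.comp_hasDerivAt t hσd).const_sub c
    have h0 : c - ℓ (σ t) ≠ 0 := (hupos t (Ioo_subset_Icc_self ht)).ne'
    have hlog := hl.log h0
    have hder : derivWithin σ (Icc a b) t = deriv σ t :=
      derivWithin_of_mem_nhds (Icc_mem_nhds ht.1 ht.2)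
    rw [hψ]
    simp only [hder]
    exact hlog
  have hFTC := intervalIntegral.integral_eq_sub_of_hasDerivAt_of_le hab hφc hderiv hψint
  have hkint := kob_integrable hopen hab hσ hmap
  have habs : |ψ| = fun t => |ψ t| := rfl
  calc |Real.log (c - ℓ (σ b)) - Real.log (c - ℓ (σ a))|
      = |∫ t in a..b, ψ t| := by rw [hFTC]
    _ ≤ ∫ t in a..b, |ψ t| := intervalIntegral.abs_integral_le_integral_abs hab
    _ ≤ ∫ t in a..b, 2 * kobMetric Ω (σ t) (deriv σ t) := by
        apply intervalIntegral.integral_mono_ae_restrict hab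
          (hψc.abs.intervalIntegrable_of_Icc hab) (hkint.const_mul 2)
        have hne_a : ∀ᵐ t ∂(volume.restrict (Icc a b)), t ≠ a :=
          ae_restrict_of_ae (ae_iff.mpr (by simp [Real.volume_singleton]))
        have hne_b : ∀ᵐ t ∂(volume.restrict (Icc a b)), t ≠ b :=
          ae_restrict_of_ae (ae_iff.mpr (by simp [Real.volume_singleton]))
        filter_upwards [ae_restrict_mem measurableSet_Icc, hne_a, hne_b] with t ht hta htb
        have htoo : t ∈ Ioo a b := ⟨lt_of_le_of_ne ht.1 (Ne.symm hta), lt_of_le_of_ne ht.2 htb⟩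
        have hder : derivWithin σ (Icc a b) t = deriv σ t :=
          derivWithin_of_mem_nhds (Icc_mem_nhds htoo.1 htoo.2)
        have hup := hupos t ht
        have hlow := kob_lower hopen hsep (hmap ht) (v := deriv σ t)
        have : |ψ t| = |ℓ (deriv σ t)| / (c - ℓ (σ t)) := by
          rw [hψ]
          simp only [hder]
          rw [abs_div, abs_neg, abs_of_pos hup]
        rw [this, div_le_iff₀ hup]
        calc |ℓ (deriv σ t)| ≤ 2 * (c - ℓ (σ t)) * kobMetric Ω (σ t) (deriv σ t) := hlow
          _ = 2 * kobMetric Ω (σ t) (deriv σ t) * (c - ℓ (σ t)) := by ring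
    _ = 2 * ∫ t in a..b, kobMetric Ω (σ t) (deriv σ t) :=
        intervalIntegral.integral_const_mul 2 _

lemma cross {X : Type*} [TopologicalSpace X] {Ω s : Set X} (hopen : IsOpen Ω)
    (hs : IsPreconnected s) {p q : X} (hp : p ∈ s) (hpΩ : p ∈ Ω) (hq : q ∈ s) (hqΩ : q ∉ Ω) :
    ∃ r ∈ s, r ∈ frontier Ω := by
  by_contra h
  push_neg at h
  have hcover : s ⊆ Ω ∪ (closure Ω)ᶜ := by
    intro w hw
    by_cases hwc : w ∈ closure Ω
    · left
      rw [closure_eq_self_union_frontier] at hwc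
      rcases hwc with h1 | h1
      · exact h1
      · exact absurd h1 (h w hw)
    · right; exact hwc
  obtain ⟨r, hrs, hrΩ, hrc⟩ := hs Ω (closure Ω)ᶜ hopen isClosed_closure.isOpen_compl hcover
    ⟨p, hp, hpΩ⟩ ⟨q, hq, fun hqc => by
      rw [closure_eq_self_union_frontier] at hqc
      rcases hqc with h1 | h1
      · exact hqΩ h1
      · exact h q hq h1⟩
  exact hrc (subset_closure hrΩ)

lemma delta_le {Ω : Set (EuclideanSpace ℂ (Fin n))} (hopen : IsOpen Ω)
    {ℓ : EuclideanSpace ℂ (Fin n) →L[ℝ] ℝ} (hℓ : ‖ℓ‖ = 1) {c : ℝ}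
    (hsep : ∀ w ∈ Ω, ℓ w < c) {z : EuclideanSpace ℂ (Fin n)} (hz : z ∈ Ω) :
    infDist z (frontier Ω) ≤ c - ℓ z := by
  have hD : 0 < c - ℓ z := sub_pos.mpr (hsep z hz)
  have key : ∀ ε : ℝ, 0 < ε → ε ≤ 1/2 →
      infDist z (frontier Ω) * (1 - ε) ≤ (c - ℓ z) + ε := by
    intro ε hε hε2
    obtain ⟨u, hu1, hu2⟩ := ℓ.exists_lt_apply_of_lt_opNorm
      (show 1 - ε < ‖ℓ‖ by rw [hℓ]; linarith)
    obtain ⟨u', hu'1, hu'2⟩ : ∃ u' : EuclideanSpace ℂ (Fin n), ‖u'‖ < 1 ∧ 1 - ε < ℓ u' := by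
      rcases le_or_gt 0 (ℓ u) with hle | hlt
      · exact ⟨u, hu1, by rwa [Real.norm_eq_abs, abs_of_nonneg hle] at hu2⟩
      · refine ⟨-u, by simpa using hu1, ?_⟩
        rw [map_neg]
        rwa [Real.norm_eq_abs, abs_of_neg hlt] at hu2
    have hℓu : 0 < ℓ u' := by linarith
    set t := ((c - ℓ z) + ε) / (ℓ u') with ht'
    have htpos : 0 < t := by positivity
    set x' := z + t • u' with hx'def
    have hx'val : ℓ x' = c + ε := by
      rw [hx'def, map_add, _root_.map_smul, smul_eq_mul, ht']
      field_simp
      ring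
    have hx'Ω : x' ∉ Ω := fun hmem => absurd (hsep _ hmem) (by rw [hx'val]; linarith)
    have hseg : IsPreconnected (segment ℝ z x') := (convex_segment z x').isPreconnected
    obtain ⟨q, hqseg, hqf⟩ := cross hopen hseg (left_mem_segment ℝ z x') hz
      (right_mem_segment ℝ z x') hx'Ω
    have hdq : dist z q ≤ dist z x' := by
      have hsub : segment ℝ z x' ⊆ closedBall z (dist z x') :=
        (convex_closedBall z (dist z x')).segment_subset (mem_closedBall_self dist_nonneg)
          (by rw [mem_closedBall, dist_comm])
      have hmem := hsub hqseg
      rw [mem_closedBall] at hmem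
      rw [dist_comm]; exact hmem
    have h2 : dist z x' = t * ‖u'‖ := by
      rw [hx'def, dist_self_add_right, norm_smul, Real.norm_eq_abs, abs_of_pos htpos]
    have h3 : infDist z (frontier Ω) ≤ ((c - ℓ z) + ε) / (1 - ε) := by
      calc infDist z (frontier Ω) ≤ dist z q := infDist_le_dist_of_mem hqf
        _ ≤ dist z x' := hdq
        _ = t * ‖u'‖ := h2
        _ ≤ t * 1 := by nlinarith [norm_nonneg u']
        _ = ((c - ℓ z) + ε) / (ℓ u') := by rw [mul_one]
        _ ≤ ((c - ℓ z) + ε) / (1 - ε) := by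
            apply div_le_div_of_nonneg_left (by linarith) (by linarith) (by linarith)
    rw [← le_div_iff₀ (by linarith : (0:ℝ) < 1 - ε)]
    exact h3
  by_contra hcon
  push_neg at hcon
  set δ := infDist z (frontier Ω) with hδ
  have hδ0 : 0 ≤ δ := infDist_nonneg
  have hsub0 : 0 < δ - (c - ℓ z) := by linarith
  set ε := min (1/2 : ℝ) ((δ - (c - ℓ z))/(2*(1+δ))) with hε'
  have hε0 : 0 < ε := lt_min (by norm_num) (by positivity)
  have hkey := key ε hε0 (min_le_left _ _)
  have hε1 : ε ≤ (δ - (c - ℓ z))/(2*(1+δ)) := min_le_right _ _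
  have h4 : ε * (2*(1+δ)) ≤ δ - (c - ℓ z) := by
    rw [← le_div_iff₀ (by positivity : (0:ℝ) < 2*(1+δ))]
    exact hε1
  nlinarith [hkey, h4]

lemma exists_functional {Ω : Set (EuclideanSpace ℂ (Fin n))} (hconv : Convex ℝ Ω)
    (hopen : IsOpen Ω) (hne : (frontier Ω).Nonempty) {w : EuclideanSpace ℂ (Fin n)}
    (hw : w ∈ Ω) :
    ∃ (ℓ : EuclideanSpace ℂ (Fin n) →L[ℝ] ℝ) (c : ℝ), ‖ℓ‖ = 1 ∧ (∀ q ∈ Ω, ℓ q < c) ∧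
      c - ℓ w ≤ infDist w (frontier Ω) := by
  obtain ⟨p, hpf, hpd⟩ := isClosed_frontier.exists_infDist_eq_dist hne w
  have hpΩ : p ∉ Ω := by
    rw [hopen.frontier_eq] at hpf
    exact hpf.2
  obtain ⟨f, hf⟩ := geometric_hahn_banach_open_point hconv hopen hpΩ
  have hf0 : f ≠ 0 := by
    intro h0
    have := hf w hw
    rw [h0] at this
    simp at this
  have hfn : 0 < ‖f‖ := norm_pos_iff.mpr hf0
  have hℓnorm : ‖(‖f‖⁻¹ • f : EuclideanSpace ℂ (Fin n) →L[ℝ] ℝ)‖ = 1 := by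
    rw [norm_smul f (r := ‖f‖⁻¹), norm_inv, norm_norm, inv_mul_cancel₀ hfn.ne']
  refine ⟨‖f‖⁻¹ • f, ‖f‖⁻¹ * f p, hℓnorm, ?_, ?_⟩
  · intro q hq
    simp only [ContinuousLinearMap.smul_apply, smul_eq_mul]
    exact mul_lt_mul_of_pos_left (hf q hq) (inv_pos.mpr hfn)
  · have h1 : ‖f‖⁻¹ * f p - (‖f‖⁻¹ • f) w = (‖f‖⁻¹ • f) (p - w) := by
      simp only [ContinuousLinearMap.smul_apply, smul_eq_mul, map_sub]
      try ring
    rw [h1, hpd]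
    calc (‖f‖⁻¹ • f) (p - w) ≤ |(‖f‖⁻¹ • f) (p - w)| := le_abs_self _
      _ ≤ ‖(‖f‖⁻¹ • f : EuclideanSpace ℂ (Fin n) →L[ℝ] ℝ)‖ * ‖p - w‖ := by
          rw [← Real.norm_eq_abs]
          exact ContinuousLinearMap.le_opNorm _ _
      _ = dist w p := by rw [hℓnorm, one_mul, dist_eq_norm, norm_sub_rev]

end KobAux

/-- The Kobayashi length of a curve `σ : [a,b] → Ω`. -/
noncomputable def kobLength {n : ℕ} (Ω : Set (EuclideanSpace ℂ (Fin n)))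
    (σ : ℝ → EuclideanSpace ℂ (Fin n)) (a b : ℝ) : ℝ :=
  ∫ t in a..b, kobMetric Ω (σ t) (deriv σ t)

/-- The (integrated) Kobayashi pseudodistance on `Ω`, via lengths of curves joining the
two points inside `Ω`. -/
noncomputable def kobDist {n : ℕ} (Ω : Set (EuclideanSpace ℂ (Fin n)))
    (x y : EuclideanSpace ℂ (Fin n)) : ℝ :=
  sInf {L : ℝ | ∃ σ : ℝ → EuclideanSpace ℂ (Fin n), ∃ a b : ℝ, a ≤ b ∧
    σ a = x ∧ σ b = y ∧ ContDiffOn ℝ 1 σ (Icc a b) ∧ MapsTo σ (Icc a b) Ω ∧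
    L = kobLength Ω σ a b}

/-- Distance from `x` to the boundary of `Ω` within the complex line `x + ℂ v`. -/
noncomputable def deltaDir {n : ℕ} (Ω : Set (EuclideanSpace ℂ (Fin n)))
    (x v : EuclideanSpace ℂ (Fin n)) : ℝ :=
  infDist x (frontier Ω ∩ {y | ∃ c : ℂ, y = x + c • v})

open KobAux

/-- on a convex domain the Kobayashi distance dominates
`½ |log (δ_Ω(x)/δ_Ω(y))|`. -/
theorem stmt_9 {n : ℕ} (Ω : Set (EuclideanSpace ℂ (Fin n)))
    (hconv : Convex ℝ Ω) (hopen : IsOpen Ω)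
    (x y : EuclideanSpace ℂ (Fin n)) (hx : x ∈ Ω) (hy : y ∈ Ω) :
    (1 / 2) * |Real.log (infDist x (frontier Ω) / infDist y (frontier Ω))| ≤
      kobDist Ω x y := by
  have hnonempty : {L : ℝ | ∃ σ : ℝ → EuclideanSpace ℂ (Fin n), ∃ a b : ℝ, a ≤ b ∧
      σ a = x ∧ σ b = y ∧ ContDiffOn ℝ 1 σ (Icc a b) ∧ MapsTo σ (Icc a b) Ω ∧
      L = kobLength Ω σ a b}.Nonempty := by
    refine ⟨kobLength Ω (fun t => x + t • (y - x)) 0 1,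
      fun t => x + t • (y - x), 0, 1, zero_le_one, by simp, by simp, ?_, ?_, rfl⟩
    · exact ((contDiff_const.add (contDiff_id.smul contDiff_const))).contDiffOn
    · intro t ht
      exact hconv.add_smul_sub_mem hx hy ht
  apply le_csInf hnonempty
  rintro L ⟨σ, a, b, hab, hsa, hsb, hσ, hmap, rfl⟩
  rw [kobLength]
  rcases (frontier Ω).eq_empty_or_nonempty with hfe | hfne
  · rw [hfe]
    have h0 : (0:ℝ) ≤ ∫ t in a..b, kobMetric Ω (σ t) (deriv σ t) :=
      intervalIntegral.integral_nonneg hab (fun t _ => kob_nonneg Ω _ _)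
    simpa [Metric.infDist_empty] using h0
  · have hdisj : ∀ w ∈ Ω, w ∉ frontier Ω := by
      intro w hw hwf
      rw [hopen.frontier_eq] at hwf
      exact hwf.2 hw
    have hδx : 0 < infDist x (frontier Ω) :=
      (isClosed_frontier.notMem_iff_infDist_pos hfne).mp (hdisj x hx)
    have hδy : 0 < infDist y (frontier Ω) :=
      (isClosed_frontier.notMem_iff_infDist_pos hfne).mp (hdisj y hy)
    obtain ⟨ℓy, cy, hy1, hy2, hy3⟩ := exists_functional hconv hopen hfne hy
    obtain ⟨ℓx, cx, hx1, hx2, hx3⟩ := exists_functional hconv hopen hfne hx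
    have hb1 := curve_bound hopen hy2 hab hσ hmap
    have hb2 := curve_bound hopen hx2 hab hσ hmap
    rw [hsa, hsb] at hb1 hb2
    have hcyx : infDist x (frontier Ω) ≤ cy - ℓy x := delta_le hopen hy1 hy2 hx
    have hcxy : infDist y (frontier Ω) ≤ cx - ℓx y := delta_le hopen hx1 hx2 hy
    have hby : 0 < cy - ℓy y := sub_pos.mpr (hy2 y hy)
    have hbx : 0 < cx - ℓx x := sub_pos.mpr (hx2 x hx)
    have h1 : Real.log (infDist x (frontier Ω)) - Real.log (infDist y (frontier Ω)) ≤
        2 * ∫ t in a..b, kobMetric Ω (σ t) (deriv σ t) := by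
      have e1 : Real.log (infDist x (frontier Ω)) ≤ Real.log (cy - ℓy x) :=
        Real.log_le_log hδx hcyx
      have e2 : Real.log (cy - ℓy y) ≤ Real.log (infDist y (frontier Ω)) :=
        Real.log_le_log hby hy3
      have e3 : Real.log (cy - ℓy x) - Real.log (cy - ℓy y) ≤
          |Real.log (cy - ℓy y) - Real.log (cy - ℓy x)| := by
        rw [abs_sub_comm]
        exact le_abs_self _
      linarith [hb1, e1, e2, e3]
    have h2 : Real.log (infDist y (frontier Ω)) - Real.log (infDist x (frontier Ω)) ≤
        2 * ∫ t in a..b, kobMetric Ω (σ t) (deriv σ t) := by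
      have e1 : Real.log (infDist y (frontier Ω)) ≤ Real.log (cx - ℓx y) :=
        Real.log_le_log hδy hcxy
      have e2 : Real.log (cx - ℓx x) ≤ Real.log (infDist x (frontier Ω)) :=
        Real.log_le_log hbx hx3
      have e3 : Real.log (cx - ℓx y) - Real.log (cx - ℓx x) ≤
          |Real.log (cx - ℓx y) - Real.log (cx - ℓx x)| := le_abs_self _
      linarith [hb2, e1, e2, e3]
    have habs : |Real.log (infDist x (frontier Ω) / infDist y (frontier Ω))| ≤
        2 * ∫ t in a..b, kobMetric Ω (σ t) (deriv σ t) := by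
      rw [Real.log_div hδx.ne' hδy.ne']
      exact abs_sub_le_iff.mpr ⟨h1, h2⟩
    linarith
end

section
/- Let $\Omega \subset \mathbb{C}^n$ be a convex open set. For all $x, y \in \Omega$, $K_\Omega(x,y) \ge \frac{1}{2} \log\left(1 + \frac{|x-y|}{\min(\delta_\Omega(x, x-y),\ \delta_\Omega(y, x-y))}\right)$. -/
open Metric Set MeasureTheory intervalIntegral
open Filter Topology

variable {n : ℕ} {Ω : Set (EuclideanSpace ℂ (Fin n))} {x v : EuclideanSpace ℂ (Fin n)}

def kobSet {n : ℕ} (Ω : Set (EuclideanSpace ℂ (Fin n)))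
    (x v : EuclideanSpace ℂ (Fin n)) : Set ℝ :=
  {r : ℝ | ∃ f : ℂ → EuclideanSpace ℂ (Fin n),
    DifferentiableOn ℂ f (ball (0 : ℂ) 1) ∧ MapsTo f (ball (0 : ℂ) 1) Ω ∧ f 0 = x ∧
    ∃ ξ : ℂ, ξ • derivWithin f (ball (0 : ℂ) 1) 0 = v ∧ r = ‖ξ‖}

lemma kobMetric_eq : kobMetric Ω x v = sInf (kobSet Ω x v) := rfl

lemma kobSet_nonneg {r : ℝ} (hr : r ∈ kobSet Ω x v) : 0 ≤ r := by
  obtain ⟨f, -, -, -, ξ, -, rfl⟩ := hr; exact norm_nonneg _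

lemma kobSet_bddBelow : BddBelow (kobSet Ω x v) :=
  ⟨0, fun r hr => kobSet_nonneg hr⟩

lemma kobMetric_nonneg : 0 ≤ kobMetric Ω x v :=
  Real.sInf_nonneg (fun _ hr => kobSet_nonneg hr)

lemma mem_kobSet_of_ball {r : ℝ} (hr : 0 < r) (hball : ball x r ⊆ Ω) :
    (2 * ‖v‖ / r) ∈ kobSet Ω x v := by
  by_cases hv : v = 0
  · refine ⟨fun _ => x, differentiableOn_const _, fun z _ => hball (mem_ball_self hr), rfl,
      0, by simp [hv], by simp [hv]⟩
  · have hvn : (0:ℝ) < ‖v‖ := norm_pos_iff.2 hv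
    set w : EuclideanSpace ℂ (Fin n) := ((r / (2 * ‖v‖) : ℝ) : ℂ) • v with hw
    refine ⟨fun z => x + z • w, ?_, ?_, by simp, ((2 * ‖v‖ / r : ℝ) : ℂ), ?_, ?_⟩
    · exact (differentiable_const _).differentiableOn.add
        ((differentiable_id.smul_const w).differentiableOn)
    · intro z hz
      apply hball
      have hwn : ‖w‖ = r / 2 := by
        rw [hw, norm_smul]
        simp only [Complex.norm_real, Real.norm_eq_abs]
        rw [abs_of_pos (by positivity)]
        field_simp
      simp only [mem_ball, dist_eq_norm, add_sub_cancel_left] at *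
      have hz1 : ‖z‖ < 1 := by simpa using hz
      calc ‖z • w‖ = ‖z‖ * ‖w‖ := norm_smul _ _
        _ < r := by rw [hwn]; nlinarith [norm_nonneg z]
    · have hd : HasDerivAt (fun z : ℂ => x + z • w) w 0 := by
        simpa using (hasDerivAt_const (0:ℂ) x).fun_add ((hasDerivAt_id (0:ℂ)).smul_const w)
      rw [derivWithin_of_isOpen isOpen_ball (mem_ball_self one_pos), hd.deriv]
      rw [hw, smul_smul, ← Complex.ofReal_mul]
      have : (2 * ‖v‖ / r) * (r / (2 * ‖v‖)) = 1 := by field_simp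
      rw [this]; simp
    · simp only [Complex.norm_real, Real.norm_eq_abs]
      rw [abs_of_pos (by positivity)]

lemma kobSet_nonempty (hopen : IsOpen Ω) (hx : x ∈ Ω) : (kobSet Ω x v).Nonempty := by
  obtain ⟨r, hr, hball⟩ := Metric.isOpen_iff.1 hopen x hx
  exact ⟨_, mem_kobSet_of_ball hr hball⟩

lemma kobMetric_le_of_ball {r : ℝ} (hr : 0 < r) (hball : ball x r ⊆ Ω) :
    kobMetric Ω x v ≤ 2 * ‖v‖ / r :=
  csInf_le kobSet_bddBelow (mem_kobSet_of_ball hr hball)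
/-- Schwarz-type lemma for maps from the disk into a half-plane `re < c`. -/
lemma halfplane_schwarz {g : ℂ → ℂ} {c : ℝ} (hd : DifferentiableOn ℂ g (ball 0 1))
    (hm : ∀ z ∈ ball (0:ℂ) 1, (g z).re < c) :
    ‖deriv g 0‖ ≤ 2 * (c - (g 0).re) := by
  have h0 : (0:ℂ) ∈ ball (0:ℂ) 1 := mem_ball_self one_pos
  have hg0 : (g 0).re < c := hm 0 h0
  set g0 := g 0 with hg0def
  set D : ℂ → ℂ := fun w => w + ((starRingEnd ℂ) g0 - ((2*c : ℝ) : ℂ)) with hD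
  have hDne : ∀ w : ℂ, w.re < c → D w ≠ 0 := by
    intro w hw hw0
    have h2 : (D w).re = w.re + g0.re - 2*c := by
      simp [hD]
      ring
    rw [hw0] at h2
    simp at h2
    linarith
  set T : ℂ → ℂ := fun w => (w - g0) / D w with hT
  -- T maps the halfplane into the unit ball
  have hTmem : ∀ w : ℂ, w.re < c → T w ∈ ball (0:ℂ) 1 := by
    intro w hw
    have hne := hDne w hw
    have habs : ‖w - g0‖ < ‖D w‖ := by
      have h1 : Complex.normSq (w - g0) < Complex.normSq (D w) := by
        simp only [Complex.normSq_apply, hD, Complex.add_re, Complex.add_im, Complex.sub_re,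
          Complex.sub_im, Complex.conj_re, Complex.conj_im, Complex.mul_re, Complex.mul_im,
          Complex.ofReal_re, Complex.ofReal_im]
        nlinarith [hg0, hw]

      have := Real.sqrt_lt_sqrt (Complex.normSq_nonneg _) h1
      simpa [Complex.norm_def] using this
    simp only [mem_ball, dist_zero_right, hT]
    rw [norm_div]
    rw [div_lt_one (norm_pos_iff.mpr hne)]
    exact habs
  have hT0 : T g0 = 0 := by simp [hT]
  -- derivative of T at g0
  have hDg0 : D g0 = ((2 * (g0.re - c) : ℝ) : ℂ) := by
    apply Complex.ext <;> simp [hD] <;> ring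
  have hDg0ne : D g0 ≠ 0 := hDne g0 hg0
  have hTd : HasDerivAt T (1 / D g0) g0 := by
    have h1 : HasDerivAt (fun w : ℂ => w - g0) 1 g0 := by
      simpa using (hasDerivAt_id g0).sub_const g0
    have h2 : HasDerivAt D 1 g0 := by
      simpa [hD] using (hasDerivAt_id g0).add_const ((starRingEnd ℂ) g0 - ((2*c:ℝ):ℂ))
    have h3 := h1.div h2 hDg0ne
    have h4 : (1 * D g0 - (g0 - g0) * 1) / D g0 ^ 2 = 1 / D g0 := by
      rw [sub_self, zero_mul, sub_zero, one_mul, pow_two]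
      rw [div_mul_cancel_left₀ hDg0ne, one_div]
    rwa [h4] at h3
  -- the composition
  have hgd : DifferentiableAt ℂ g 0 := hd.differentiableAt (isOpen_ball.mem_nhds h0)
  have hFd : HasDerivAt (T ∘ g) (1 / D g0 * deriv g 0) 0 := by
    have := hgd.hasDerivAt
    exact (hTd.comp 0 this)
  have hFdiff : DifferentiableOn ℂ (T ∘ g) (ball 0 1) := by
    intro z hz
    have hgz : DifferentiableWithinAt ℂ g (ball 0 1) z := hd z hz
    have hTz : DifferentiableAt ℂ T (g z) := by
      have hne := hDne (g z) (hm z hz)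
      have h1 : DifferentiableAt ℂ (fun w : ℂ => w - g0) (g z) := by fun_prop
      have h2 : DifferentiableAt ℂ D (g z) := by
        simp only [hD]; fun_prop
      exact h1.div h2 hne
    exact hTz.comp_differentiableWithinAt z hgz
  have hFmaps : MapsTo (T ∘ g) (ball 0 1) (ball ((T ∘ g) 0) 1) := by
    intro z hz
    have : (T ∘ g) 0 = 0 := by simp only [Function.comp_apply]; exact hT0
    rw [this]
    exact hTmem (g z) (hm z hz)
  have hkey : ‖deriv (T ∘ g) 0‖ ≤ 1 := by
    have := Complex.norm_deriv_le_div_of_mapsTo_ball hFdiff (hFmaps.mono_right ball_subset_closedBall) one_pos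
    simpa using this
  rw [hFd.deriv] at hkey
  rw [norm_mul, norm_div, norm_one] at hkey
  have hDg0norm : ‖D g0‖ = 2 * (c - g0.re) := by
    rw [hDg0, Complex.norm_real, Real.norm_eq_abs, abs_of_neg (by linarith)]
    ring
  rw [hDg0norm] at hkey
  have hpos : 0 < 2 * (c - g0.re) := by linarith
  calc ‖deriv g 0‖ = (1 / (2*(c - g0.re)) * ‖deriv g 0‖) * (2*(c-g0.re)) := by
        rw [mul_comm, ← mul_assoc, mul_one_div_cancel hpos.ne', one_mul]
    _ ≤ 1 * (2*(c-g0.re)) := by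
        apply mul_le_mul_of_nonneg_right hkey hpos.le
    _ = 2 * (c - (g 0).re) := by rw [one_mul, hg0def]

/-- Lower bound for the Kobayashi metric from a separating linear functional. -/
lemma kobMetric_ge (ℓ : EuclideanSpace ℂ (Fin n) →L[ℂ] ℂ) {c : ℝ}
    (hΩ : ∀ z ∈ Ω, (ℓ z).re < c) (hopen : IsOpen Ω) (hx : x ∈ Ω) :
    ‖ℓ v‖ / (2 * (c - (ℓ x).re)) ≤ kobMetric Ω x v := by
  rw [kobMetric_eq]
  apply le_csInf (kobSet_nonempty hopen hx)
  rintro r ⟨f, hdf, hmf, hf0, ξ, hξ, rfl⟩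
  have h0 : (0:ℂ) ∈ ball (0:ℂ) 1 := mem_ball_self one_pos
  have hfa : DifferentiableAt ℂ f 0 := hdf.differentiableAt (isOpen_ball.mem_nhds h0)
  set g : ℂ → ℂ := fun z => ℓ (f z) with hg
  have hgd : DifferentiableOn ℂ g (ball 0 1) :=
    fun z hz => (ℓ.differentiableAt.comp_differentiableWithinAt z (hdf z hz))
  have hgm : ∀ z ∈ ball (0:ℂ) 1, (g z).re < c := fun z hz => hΩ _ (hmf hz)
  have hkey := halfplane_schwarz hgd hgm
  have hg0 : g 0 = ℓ x := by rw [hg]; simp [hf0]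
  have hgderiv : deriv g 0 = ℓ (deriv f 0) := by
    have : HasDerivAt g (ℓ (deriv f 0)) 0 :=
      (ℓ.hasFDerivAt.comp_hasDerivAt 0 hfa.hasDerivAt)
    exact this.deriv
  rw [hgderiv, hg0] at hkey
  have hw : derivWithin f (ball (0:ℂ) 1) 0 = deriv f 0 :=
    derivWithin_of_isOpen isOpen_ball h0
  rw [hw] at hξ
  have hlv : ℓ v = ξ * ℓ (deriv f 0) := by
    rw [← hξ, ℓ.map_smul]; simp
  have hpos : 0 < 2 * (c - (ℓ x).re) := by
    have := hΩ x hx; linarith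
  rw [div_le_iff₀ hpos, hlv, norm_mul, mul_comm]
  calc ‖ℓ (deriv f 0)‖ * ‖ξ‖ ≤ (2 * (c - (ℓ x).re)) * ‖ξ‖ :=
        mul_le_mul_of_nonneg_right hkey (norm_nonneg _)
    _ = ‖ξ‖ * (2 * (c - (ℓ x).re)) := by ring

/-- Upper semicontinuity-type estimate for the Kobayashi metric. -/
lemma kobMetric_usc (hopen : IsOpen Ω) (hx : x ∈ Ω) (v : EuclideanSpace ℂ (Fin n))
    {ε : ℝ} (hε : 0 < ε) :
    ∃ δ > 0, ∀ x' v' : EuclideanSpace ℂ (Fin n), dist x' x < δ → dist v' v < δ →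
      kobMetric Ω x' v' < kobMetric Ω x v + ε := by
  set κ := kobMetric Ω x v with hκ
  have hκ0 : 0 ≤ κ := kobMetric_nonneg
  have hlt : sInf (kobSet Ω x v) < κ + ε/2 := by
    rw [← kobMetric_eq, ← hκ]; linarith
  obtain ⟨R, hRmem, hRlt⟩ := exists_lt_of_csInf_lt (kobSet_nonempty hopen hx) hlt
  obtain ⟨f, hdf, hmf, hf0, ξ, hξ, rfl⟩ := hRmem
  by_cases hξ0 : ξ = 0
  · -- v = 0 case
    have hv : v = 0 := by rw [← hξ, hξ0, zero_smul]
    obtain ⟨r₁, hr₁, hball⟩ := Metric.isOpen_iff.1 hopen x hx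
    refine ⟨min (r₁/2) (ε * r₁ / 8), by positivity, fun x' v' hx' hv' => ?_⟩
    have hball' : ball x' (r₁/2) ⊆ Ω := by
      intro z hz
      apply hball
      rw [mem_ball] at *
      calc dist z x ≤ dist z x' + dist x' x := dist_triangle _ _ _
        _ < r₁/2 + min (r₁/2) (ε * r₁ / 8) := by
            have := lt_of_lt_of_le hx' (le_refl _)
            exact add_lt_add_of_lt_of_le hz (le_of_lt hx')
        _ ≤ r₁ := by
            have := min_le_left (r₁/2) (ε * r₁ / 8); linarith
    have hle : kobMetric Ω x' v' ≤ 2 * ‖v'‖ / (r₁/2) :=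
      kobMetric_le_of_ball (by positivity) hball'
    have hv'n : ‖v'‖ < ε * r₁ / 8 := by
      have : dist v' v = ‖v'‖ := by rw [hv, dist_zero_right]
      rw [this] at hv'
      exact lt_of_lt_of_le hv' (min_le_right _ _)
    have hstep : 2 * ‖v'‖ / (r₁/2) < κ + ε := by
      rw [div_lt_iff₀ (by positivity)]
      nlinarith
    exact lt_of_le_of_lt hle hstep
  · -- main case
    set w := derivWithin f (ball (0:ℂ) 1) 0 with hwdef
    have hξn : 0 < ‖ξ‖ := norm_pos_iff.2 hξ0
    set r : ℝ := (κ + 3*ε/4) / (κ + ε) with hrdef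
    have hr0 : 0 < r := by positivity
    have hr1 : r < 1 := by
      rw [hrdef, div_lt_one (by positivity)]; linarith
    have hξr : ‖ξ‖ / r < κ + ε := by
      rw [div_lt_iff₀ hr0, hrdef]
      rw [mul_div_assoc, mul_div_assoc']
      rw [lt_div_iff₀ (by positivity)]
      nlinarith
    -- compact image
    have hsub : closedBall (0:ℂ) r ⊆ ball (0:ℂ) 1 := by
      intro z hz
      rw [mem_closedBall] at hz; rw [mem_ball]
      exact lt_of_le_of_lt hz hr1
    have hK : IsCompact (f '' closedBall (0:ℂ) r) :=
      (isCompact_closedBall _ _).image_of_continuousOn (hdf.continuousOn.mono hsub)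
    have hKΩ : f '' closedBall (0:ℂ) r ⊆ Ω := by
      rintro _ ⟨z, hz, rfl⟩; exact hmf (hsub hz)
    obtain ⟨d, hd0, hdsub⟩ := hK.exists_thickening_subset_open hopen hKΩ
    refine ⟨min (d/2) (d * ‖ξ‖ / (2*r)), by positivity, fun x' v' hx' hv' => ?_⟩
    set u : EuclideanSpace ℂ (Fin n) := ((r:ℂ)/ξ) • (v' - v) with hudef
    have hun : ‖u‖ < d/2 := by
      rw [hudef, norm_smul, norm_div, Complex.norm_real, Real.norm_eq_abs, abs_of_pos hr0]
      have hv'' : ‖v' - v‖ < d * ‖ξ‖ / (2*r) := by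
        rw [← dist_eq_norm]; exact lt_of_lt_of_le hv' (min_le_right _ _)
      rw [div_mul_eq_mul_div, div_lt_iff₀ hξn]
      calc r * ‖v' - v‖ < r * (d * ‖ξ‖ / (2*r)) := by
            exact mul_lt_mul_of_pos_left hv'' hr0
        _ = d/2 * ‖ξ‖ := by field_simp
    set g : ℂ → EuclideanSpace ℂ (Fin n) :=
      fun z => f ((r:ℂ)*z) + ((x' - x) + z • u) with hgdef
    have hrc : ((r:ℂ)) ≠ 0 := by
      simpa using hr0.ne'
    -- membership of scaled points
    have hmem : ∀ z : ℂ, z ∈ ball (0:ℂ) 1 → (r:ℂ)*z ∈ closedBall (0:ℂ) r := by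
      intro z hz
      rw [mem_closedBall, dist_zero_right, norm_mul, Complex.norm_real, Real.norm_eq_abs,
        abs_of_pos hr0]
      rw [mem_ball, dist_zero_right] at hz
      nlinarith [norm_nonneg z]
    have hgdiff : DifferentiableOn ℂ g (ball (0:ℂ) 1) := by
      apply DifferentiableOn.add
      · apply DifferentiableOn.comp hdf
        · exact ((differentiable_id.const_mul ((r:ℂ))).differentiableOn)
        · intro z hz; exact hsub (hmem z hz)
      · exact ((differentiable_const _).add (differentiable_id.smul_const u)).differentiableOn
    have hgmaps : MapsTo g (ball (0:ℂ) 1) Ω := by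
      intro z hz
      apply hdsub
      rw [mem_thickening_iff]
      refine ⟨f ((r:ℂ)*z), ⟨(r:ℂ)*z, hmem z hz, rfl⟩, ?_⟩
      rw [hgdef]
      simp only [dist_eq_norm, add_sub_cancel_left]
      calc ‖(x' - x) + z • u‖ ≤ ‖x' - x‖ + ‖z • u‖ := norm_add_le _ _
        _ < d/2 + d/2 := by
            apply add_lt_add
            · rw [← dist_eq_norm]; exact lt_of_lt_of_le hx' (min_le_left _ _)
            · rw [norm_smul]
              rw [mem_ball, dist_zero_right] at hz
              calc ‖z‖ * ‖u‖ ≤ 1 * ‖u‖ := by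
                    apply mul_le_mul_of_nonneg_right hz.le (norm_nonneg _)
                _ = ‖u‖ := one_mul _
                _ < d/2 := hun
        _ = d := by ring
    have hg0 : g 0 = x' := by
      rw [hgdef]; simp [hf0]
    -- derivative of g at 0
    have h0 : (0:ℂ) ∈ ball (0:ℂ) 1 := mem_ball_self one_pos
    have hfa : DifferentiableAt ℂ f 0 := hdf.differentiableAt (isOpen_ball.mem_nhds h0)
    have hw' : w = deriv f 0 := by rw [hwdef, derivWithin_of_isOpen isOpen_ball h0]
    have hgd : HasDerivAt g ((r:ℂ) • deriv f 0 + u) 0 := by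
      have h1 : HasDerivAt (fun z : ℂ => f ((r:ℂ)*z)) ((r:ℂ) • deriv f 0) 0 := by
        have hinner : HasDerivAt (fun z : ℂ => (r:ℂ)*z) ((r:ℂ)) 0 := by
          simpa using (hasDerivAt_id (0:ℂ)).const_mul ((r:ℂ))
        have houter : HasDerivAt f (deriv f 0) ((r:ℂ)*0) := by
          rw [mul_zero]; exact hfa.hasDerivAt
        exact houter.scomp 0 hinner
      have h2 : HasDerivAt (fun z : ℂ => (x' - x) + z • u) u 0 := by
        simpa using (hasDerivAt_const (0:ℂ) (x'-x)).fun_add ((hasDerivAt_id (0:ℂ)).smul_const u)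
      exact h1.add h2
    have hgderivW : derivWithin g (ball (0:ℂ) 1) 0 = (r:ℂ) • deriv f 0 + u := by
      rw [derivWithin_of_isOpen isOpen_ball h0, hgd.deriv]
    -- the new scaling factor
    have hξ' : (ξ/(r:ℂ)) • derivWithin g (ball (0:ℂ) 1) 0 = v' := by
      rw [hgderivW, smul_add, smul_smul, hudef, smul_smul]
      have e1 : ξ/(r:ℂ) * (r:ℂ) = ξ := by field_simp
      have e2 : ξ/(r:ℂ) * ((r:ℂ)/ξ) = 1 := by field_simp
      rw [e1, e2, one_smul]
      rw [← hw', hξ]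
      abel
    have hmemS : ‖ξ/(r:ℂ)‖ ∈ kobSet Ω x' v' :=
      ⟨g, hgdiff, hgmaps, hg0, ξ/(r:ℂ), hξ', rfl⟩
    have hval : ‖ξ/(r:ℂ)‖ = ‖ξ‖/r := by
      rw [norm_div, Complex.norm_real, Real.norm_eq_abs, abs_of_pos hr0]
    calc kobMetric Ω x' v' ≤ ‖ξ/(r:ℂ)‖ := csInf_le kobSet_bddBelow hmemS
      _ = ‖ξ‖/r := hval
      _ < κ + ε := hξr

lemma kob_integrand_integrableOn (hopen : IsOpen Ω) {σ : ℝ → EuclideanSpace ℂ (Fin n)}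
    {a b : ℝ} (hab : a ≤ b) (hσ : ContDiffOn ℝ 1 σ (Icc a b))
    (hmap : MapsTo σ (Icc a b) Ω) :
    IntegrableOn (fun t => kobMetric Ω (σ t) (deriv σ t)) (Icc a b) := by
  rcases eq_or_lt_of_le hab with rfl | hlt
  · have hz : volume.restrict (Icc a a) = 0 := by
      rw [Icc_self, Measure.restrict_eq_zero]
      exact measure_singleton a
    rw [IntegrableOn, hz]
    exact integrable_zero_measure
  set F := fun t => kobMetric Ω (σ t) (deriv σ t) with hF
  -- geometry: uniform ball radius inside Ω
  have hK : IsCompact (σ '' Icc a b) := isCompact_Icc.image_of_continuousOn hσ.continuousOn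
  have hKΩ : σ '' Icc a b ⊆ Ω := image_subset_iff.2 hmap
  obtain ⟨d, hd0, hdsub⟩ := hK.exists_thickening_subset_open hopen hKΩ
  have hballs : ∀ t ∈ Icc a b, ball (σ t) d ⊆ Ω := by
    intro t ht z hz
    apply hdsub
    rw [mem_thickening_iff]
    exact ⟨σ t, mem_image_of_mem σ ht, hz⟩
  -- derivative bound
  have huniq : UniqueDiffOn ℝ (Icc a b) := uniqueDiffOn_Icc hlt
  have hcd : ContinuousOn (derivWithin σ (Icc a b)) (Icc a b) :=
    hσ.continuousOn_derivWithin huniq le_rfl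
  obtain ⟨C, hC⟩ := isCompact_Icc.exists_bound_of_continuousOn hcd
  have hC0 : 0 ≤ C := le_trans (norm_nonneg _) (hC a (left_mem_Icc.2 hab))
  have hderiv_eq : ∀ t ∈ Ioo a b, deriv σ t = derivWithin σ (Icc a b) t := by
    intro t ht
    have hnh : Icc a b ∈ 𝓝 t := Icc_mem_nhds ht.1 ht.2
    rw [derivWithin_of_mem_nhds hnh]
  -- openness of sublevel sets on Ioo
  have hopenA : ∀ rr : ℝ, IsOpen {t | t ∈ Ioo a b ∧ F t < rr} := by
    intro rr
    rw [isOpen_iff_mem_nhds]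
    rintro t₀ ⟨ht₀, hFt₀⟩
    have ht₀I : t₀ ∈ Icc a b := Ioo_subset_Icc_self ht₀
    have hσΩ : σ t₀ ∈ Ω := hmap ht₀I
    have hεpos : 0 < rr - F t₀ := by linarith
    obtain ⟨δ, hδ0, hδ⟩ := kobMetric_usc hopen hσΩ (deriv σ t₀) hεpos
    have hcσ : ContinuousAt σ t₀ := hσ.continuousOn.continuousAt (Icc_mem_nhds ht₀.1 ht₀.2)
    have hcd' : ContinuousAt (deriv σ) t₀ := by
      have h1 : ContinuousAt (derivWithin σ (Icc a b)) t₀ :=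
        hcd.continuousAt (Icc_mem_nhds ht₀.1 ht₀.2)
      apply h1.congr
      filter_upwards [Ioo_mem_nhds ht₀.1 ht₀.2] with s hs
      exact (hderiv_eq s hs).symm
    have e1 : ∀ᶠ t in 𝓝 t₀, dist (σ t) (σ t₀) < δ := by
      have := hcσ (ball_mem_nhds (σ t₀) hδ0)
      filter_upwards [this] with t ht using ht
    have e2 : ∀ᶠ t in 𝓝 t₀, dist (deriv σ t) (deriv σ t₀) < δ := by
      have := hcd' (ball_mem_nhds (deriv σ t₀) hδ0)
      filter_upwards [this] with t ht using ht
    filter_upwards [e1, e2, Ioo_mem_nhds ht₀.1 ht₀.2] with t h1 h2 h3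
    refine ⟨h3, ?_⟩
    have := hδ (σ t) (deriv σ t) h1 h2
    linarith
  -- measurability
  set Ftil := (Ioo a b).indicator F with hFtil
  have hFmeas : Measurable Ftil := by
    apply measurable_of_Iio
    intro rr
    by_cases hrr : 0 < rr
    · have : Ftil ⁻¹' Iio rr = {t | t ∈ Ioo a b ∧ F t < rr} ∪ (Ioo a b)ᶜ := by
        ext t
        by_cases ht : t ∈ Ioo a b
        · simp [hFtil, indicator, ht, hrr, mem_Ioo.1 ht]
        · simp [hFtil, indicator, ht, hrr]
      rw [this]
      exact ((hopenA rr).measurableSet).union measurableSet_Ioo.compl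
    · have : Ftil ⁻¹' Iio rr = {t | t ∈ Ioo a b ∧ F t < rr} := by
        ext t
        by_cases ht : t ∈ Ioo a b
        · simp [hFtil, indicator, ht, hrr, mem_Ioo.1 ht]
        · simp only [hFtil, indicator, ht, if_false, mem_preimage, mem_Iio, mem_setOf_eq]
          simp only [mem_Ioo] at ht
          constructor
          · intro h; exact absurd h (by linarith)
          · rintro ⟨h1, h2⟩; exact h1.elim
      rw [this]
      exact (hopenA rr).measurableSet
  have hrestr : volume.restrict (Icc a b) = volume.restrict (Ioo a b) :=
    (Measure.restrict_congr_set Ioo_ae_eq_Icc).symm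
  rw [IntegrableOn, hrestr]
  apply Integrable.mono' (g := fun _ => 2 * C / d)
  · exact integrableOn_const measure_Ioo_lt_top.ne
  · apply hFmeas.aestronglyMeasurable.congr
    rw [Filter.EventuallyEq, ae_restrict_iff' measurableSet_Ioo]
    exact ae_of_all _ (fun t ht => indicator_of_mem ht F)
  · rw [ae_restrict_iff' measurableSet_Ioo]
    apply ae_of_all
    intro t ht
    have htI : t ∈ Icc a b := Ioo_subset_Icc_self ht
    have h1 : F t ≤ 2 * ‖deriv σ t‖ / d :=
      kobMetric_le_of_ball hd0 (hballs t htI)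
    have h2 : ‖deriv σ t‖ ≤ C := by
      rw [hderiv_eq t ht]; exact hC t htI
    rw [Real.norm_eq_abs, abs_of_nonneg kobMetric_nonneg]
    calc F t ≤ 2 * ‖deriv σ t‖ / d := h1
      _ ≤ 2 * C / d := by gcongr

/-- Key analytic estimate: a curve in a half-plane `{re < c}` whose speed in the
Poincaré-type metric is dominated by `F` satisfies a log-type lower bound. -/
lemma key_curve_bound {F : ℝ → ℝ} {u : ℝ → ℂ} {c : ℝ} {a b : ℝ} (hab : a ≤ b)
    (hu : ContinuousOn u (Icc a b))
    (hd : ∀ t ∈ Ioo a b, ∃ w : ℂ, HasDerivAt u w t ∧ ‖w‖ / (2*(c - (u t).re)) ≤ F t)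
    (hre : ∀ t ∈ Icc a b, (u t).re < c)
    (hF : IntegrableOn F (Icc a b)) :
    (1/2) * Real.log (1 + ‖u b - u a‖ / (c - (u b).re)) ≤ ∫ t in a..b, F t := by
  set h : ℝ → ℝ := fun t => c - (u t).re with hh
  have hmemA : a ∈ Icc a b := left_mem_Icc.2 hab
  have hmemB : b ∈ Icc a b := right_mem_Icc.2 hab
  have hpos : ∀ t ∈ Icc a b, 0 < h t := fun t ht => by
    simp only [hh]; linarith [hre t ht]
  have hconth : ContinuousOn h (Icc a b) :=
    continuousOn_const.sub (Complex.continuous_re.comp_continuousOn hu)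
  -- main estimate for each ε > 0
  have main : ∀ ε : ℝ, 0 < ε →
      (1/2) * Real.log (1 + ‖u b - u a‖ / h b) ≤
        (∫ t in a..b, F t) + (1/2) * (Real.log (h a + Real.sqrt ε) - Real.log (h a)) := by
    intro ε hε
    set q : ℝ → ℝ := fun t => ((u t).re - (u a).re)^2 + ((u t).im - (u a).im)^2 with hq
    have hq0 : ∀ t, 0 ≤ q t := fun t => by positivity
    set ρ : ℝ → ℝ := fun t => Real.sqrt (ε + q t) with hρ
    have hρpos : ∀ t, 0 < ρ t := fun t => Real.sqrt_pos.2 (by have := hq0 t; linarith)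
    set φ : ℝ → ℝ := fun t => (1/2) * (Real.log (h t + ρ t) - Real.log (h t)) with hφ
    have hcontq : ContinuousOn q (Icc a b) := by
      apply ContinuousOn.add
      · exact (((Complex.continuous_re.comp_continuousOn hu).sub continuousOn_const).pow 2)
      · exact (((Complex.continuous_im.comp_continuousOn hu).sub continuousOn_const).pow 2)
    have hcontρ : ContinuousOn ρ (Icc a b) :=
      Real.continuous_sqrt.comp_continuousOn (continuousOn_const.add hcontq)
    have hcontφ : ContinuousOn φ (Icc a b) := by
      apply ContinuousOn.mul continuousOn_const
      apply ContinuousOn.sub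
      · apply ContinuousOn.log (hconth.add hcontρ)
        intro t ht
        exact (add_pos (hpos t ht) (hρpos t)).ne'
      · apply ContinuousOn.log hconth
        intro t ht
        exact (hpos t ht).ne'
    -- derivative bound on Ioo
    have hder : ∀ t ∈ Ioo a b, HasDerivAt φ (deriv φ t) t ∧ deriv φ t ≤ F t := by
      intro t ht
      have htI : t ∈ Icc a b := Ioo_subset_Icc_self ht
      obtain ⟨w, hw, hwF⟩ := hd t ht
      have hR : HasDerivAt (fun s => (u s).re) w.re t :=
        Complex.reCLM.hasFDerivAt.comp_hasDerivAt t hw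
      have hI : HasDerivAt (fun s => (u s).im) w.im t :=
        Complex.imCLM.hasFDerivAt.comp_hasDerivAt t hw
      set Δre := (u t).re - (u a).re
      set Δim := (u t).im - (u a).im
      have hqd : HasDerivAt q (2*Δre*w.re + 2*Δim*w.im) t := by
        have h1 : HasDerivAt (fun s => ((u s).re - (u a).re)^2) (2*Δre*w.re) t := by
          have := (hR.sub_const ((u a).re)).fun_pow 2
          simpa [Δre, mul_comm, mul_assoc, mul_left_comm] using this
        have h2 : HasDerivAt (fun s => ((u s).im - (u a).im)^2) (2*Δim*w.im) t := by
          have := (hI.sub_const ((u a).im)).fun_pow 2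
          simpa [Δim, mul_comm, mul_assoc, mul_left_comm] using this
        exact h1.add h2
      have hεq : ε + q t ≠ 0 := by have := hq0 t; positivity
      have hρd : HasDerivAt ρ ((2*Δre*w.re + 2*Δim*w.im) / (2 * ρ t)) t := by
        have hin : HasDerivAt (fun s => ε + q s) (2*Δre*w.re + 2*Δim*w.im) t := hqd.const_add ε
        have := (Real.hasDerivAt_sqrt hεq).comp t hin
        simpa [hρ, mul_comm, div_eq_inv_mul, mul_assoc, Function.comp_def] using this
      have hhd : HasDerivAt h (-w.re) t := hR.const_sub c
      set P := (2*Δre*w.re + 2*Δim*w.im) / (2 * ρ t) with hP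
      have hφd : HasDerivAt φ
          ((1/2) * ((h t + ρ t)⁻¹ * (-w.re + P) - (h t)⁻¹ * (-w.re))) t := by
        have hl1 : HasDerivAt (fun s => Real.log (h s + ρ s)) ((h t + ρ t)⁻¹ * (-w.re + P)) t := by
          have hne : h t + ρ t ≠ 0 := by have := hpos t htI; have := hρpos t; positivity
          exact (Real.hasDerivAt_log hne).comp t (hhd.add hρd)
        have hl2 : HasDerivAt (fun s => Real.log (h s)) ((h t)⁻¹ * (-w.re)) t := by
          have hne : h t ≠ 0 := (hpos t htI).ne'
          exact (Real.hasDerivAt_log hne).comp t hhd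
        exact (hl1.sub hl2).const_mul (1/2)
      refine ⟨hφd.deriv ▸ hφd, ?_⟩
      rw [hφd.deriv]
      -- bound the derivative
      set N := ‖w‖ with hN
      have hN2 : N^2 = w.re^2 + w.im^2 := by
        rw [hN, Complex.sq_norm, Complex.normSq_apply]; ring
      have hρsq : (ρ t)^2 = ε + q t := Real.sq_sqrt (by have := hq0 t; linarith)
      have hAle : |w.re| ≤ N := by rw [hN]; exact Complex.abs_re_le_norm w
      have hqt : q t = Δre^2 + Δim^2 := rfl
      have hPle : P ≤ N := by
        have hS2 : (Δre*w.re + Δim*w.im)^2 ≤ (ρ t)^2 * N^2 := by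
          nlinarith [sq_nonneg (Δre*w.im - Δim*w.re), hρsq, hqt, hN2, hε.le,
            sq_nonneg w.re, sq_nonneg w.im]
        have habs : |Δre*w.re + Δim*w.im| ≤ ρ t * N := by
          rw [← Real.sqrt_sq_eq_abs]
          calc Real.sqrt ((Δre*w.re + Δim*w.im)^2) ≤ Real.sqrt ((ρ t)^2 * N^2) :=
                Real.sqrt_le_sqrt hS2
            _ = ρ t * N := by
                rw [← mul_pow, Real.sqrt_sq (by positivity)]
        have hSle : Δre*w.re + Δim*w.im ≤ ρ t * N := le_trans (le_abs_self _) habs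
        rw [hP, div_le_iff₀ (by have := hρpos t; linarith)]
        nlinarith [hSle]
      have hHpos := hpos t htI
      have hQpos := hρpos t
      have hstep : (1/2) * ((h t + ρ t)⁻¹ * (-w.re + P) - (h t)⁻¹ * (-w.re)) ≤
          N / (2 * h t) := by
        have b1 : h t * P ≤ h t * N := mul_le_mul_of_nonneg_left hPle hHpos.le
        have b2 : w.re * ρ t ≤ N * ρ t :=
          mul_le_mul_of_nonneg_right ((abs_le.1 hAle).2) hQpos.le
        have e1 : (1:ℝ)/2 * ((h t + ρ t)⁻¹ * (-w.re + P) - (h t)⁻¹ * (-w.re))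
            = (h t * P + w.re * ρ t) / (2 * (h t * (h t + ρ t))) := by
          field_simp
          ring
        rw [e1, div_le_div_iff₀ (by positivity) (by positivity)]
        nlinarith [b1, b2, hHpos, hQpos]
      apply le_trans hstep
      rw [hh] at *
      calc N / (2 * (c - (u t).re)) = ‖w‖ / (2*(c - (u t).re)) := rfl
        _ ≤ F t := hwF
    -- FTC comparison
    have hFTC : φ b - φ a ≤ ∫ t in a..b, F t := by
      apply sub_le_integral_of_hasDeriv_right_of_le hab hcontφ
        (g' := fun t => deriv φ t) ?_ hF ?_
      · intro t ht
        exact ((hder t ht).1).hasDerivWithinAt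
      · intro t ht
        exact (hder t ht).2
    -- compute φ a and bound φ b below
    have hqa : q a = 0 := by simp [hq]
    have hφa : φ a = (1/2) * (Real.log (h a + Real.sqrt ε) - Real.log (h a)) := by
      simp [hφ, hρ, hqa]
    have hub : ‖u b - u a‖^2 = q b := by
      rw [Complex.sq_norm, Complex.normSq_apply, hq]
      simp [Complex.sub_re, Complex.sub_im]
      ring
    have hρb : ‖u b - u a‖ ≤ ρ b := by
      rw [hρ]
      calc ‖u b - u a‖ = Real.sqrt (‖u b - u a‖^2) := (Real.sqrt_sq (norm_nonneg _)).symm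
        _ ≤ Real.sqrt (ε + q b) := by
            apply Real.sqrt_le_sqrt; rw [hub]; linarith
    have hφb : (1/2) * Real.log (1 + ‖u b - u a‖ / h b) ≤ φ b := by
      have hb0 := hpos b hmemB
      have e1 : 1 + ‖u b - u a‖ / h b = (h b + ‖u b - u a‖) / h b := by
        field_simp
      rw [e1, hφ]
      rw [Real.log_div (by positivity) hb0.ne']
      apply mul_le_mul_of_nonneg_left _ (by norm_num)
      apply sub_le_sub_right
      apply Real.log_le_log (by positivity)
      linarith
    calc (1/2) * Real.log (1 + ‖u b - u a‖ / h b) ≤ φ b := hφb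
      _ = (φ b - φ a) + φ a := by ring
      _ ≤ (∫ t in a..b, F t) + φ a := by linarith
      _ = (∫ t in a..b, F t) + (1/2) * (Real.log (h a + Real.sqrt ε) - Real.log (h a)) := by
          rw [hφa]
  -- let ε → 0
  have hlim : Filter.Tendsto
      (fun ε : ℝ => (∫ t in a..b, F t) + (1/2) * (Real.log (h a + Real.sqrt ε) - Real.log (h a)))
      (nhdsWithin 0 (Ioi 0))
      (nhds ((∫ t in a..b, F t) + (1/2) * (Real.log (h a) - Real.log (h a)))) := by
    apply Filter.Tendsto.mono_left _ nhdsWithin_le_nhds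
    apply Filter.Tendsto.const_add
    apply Filter.Tendsto.const_mul
    apply Filter.Tendsto.sub_const
    have h1 : Filter.Tendsto (fun ε : ℝ => h a + Real.sqrt ε) (nhds 0) (nhds (h a)) := by
      have := (Real.continuous_sqrt.tendsto 0)
      rw [Real.sqrt_zero] at this
      simpa using (tendsto_const_nhds.add this)
    exact (Real.continuousAt_log (hpos a hmemA).ne').tendsto.comp h1
  have : (1/2) * Real.log (1 + ‖u b - u a‖ / h b) ≤
      (∫ t in a..b, F t) + (1/2) * (Real.log (h a) - Real.log (h a)) := by
    apply ge_of_tendsto hlim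
    filter_upwards [self_mem_nhdsWithin] with ε hε
    exact main ε hε
  simpa using this

lemma key_curve_bound' {F : ℝ → ℝ} {u : ℝ → ℂ} {c : ℝ} {a b : ℝ} (hab : a ≤ b)
    (hu : ContinuousOn u (Icc a b))
    (hd : ∀ t ∈ Ioo a b, ∃ w : ℂ, HasDerivAt u w t ∧ ‖w‖ / (2*(c - (u t).re)) ≤ F t)
    (hre : ∀ t ∈ Icc a b, (u t).re < c)
    (hF : IntegrableOn F (Icc a b)) :
    (1/2) * Real.log (1 + ‖u b - u a‖ / (c - (u a).re)) ≤ ∫ t in a..b, F t := by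
  set v : ℝ → ℂ := fun t => u (a + b - t) with hv
  set G : ℝ → ℝ := fun t => F (a + b - t) with hG
  have hmapIcc : ∀ t ∈ Icc a b, a + b - t ∈ Icc a b := by
    intro t ht
    simp only [mem_Icc] at *
    constructor <;> linarith [ht.1, ht.2]
  have hmapIoo : ∀ t ∈ Ioo a b, a + b - t ∈ Ioo a b := by
    intro t ht
    simp only [mem_Ioo] at *
    constructor <;> linarith [ht.1, ht.2]
  have hineq := key_curve_bound (F := G) (u := v) (c := c) hab
    (by
      apply hu.comp (Continuous.continuousOn (by continuity))
      intro t ht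
      exact hmapIcc t ht)
    (by
      intro t ht
      obtain ⟨w, hw, hwF⟩ := hd (a + b - t) (hmapIoo t ht)
      refine ⟨-w, ?_, ?_⟩
      · have haff : HasDerivAt (fun s : ℝ => a + b - s) (-1 : ℝ) t := by
          simpa using (hasDerivAt_const t (a+b)).fun_sub (hasDerivAt_id t)
        have := hw.scomp t haff
        simpa [hv, Function.comp_def] using this
      · simpa [hv, hG, norm_neg] using hwF)
    (by intro t ht; exact hre _ (hmapIcc t ht))
    (by
      have h1 : IntervalIntegrable F volume a b :=
        (intervalIntegrable_iff_integrableOn_Icc_of_le hab).2 hF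
      have h2 := (h1.comp_sub_left (a + b)).symm
      rw [show a + b - b = a by ring, show a + b - a = b by ring] at h2
      exact (intervalIntegrable_iff_integrableOn_Icc_of_le hab).1 h2)
  have e1 : v b = u a := by rw [hv]; norm_num
  have e2 : v a = u b := by rw [hv]; norm_num
  have e3 : (∫ t in a..b, G t) = ∫ t in a..b, F t := by
    rw [hG]
    have := intervalIntegral.integral_comp_sub_left (a := a) (b := b) F (a + b)
    rw [show a + b - b = a by ring, show a + b - a = b by ring] at this
    exact this
  rw [e1, e2, e3, norm_sub_rev] at hineq
  exact hineq

/-- Lower bound on the Kobayashi length of a single curve. -/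
lemma curve_lower (hopen : IsOpen Ω) (ℓ : EuclideanSpace ℂ (Fin n) →L[ℂ] ℂ) {c : ℝ}
    (hΩl : ∀ z ∈ Ω, (ℓ z).re < c) {σ : ℝ → EuclideanSpace ℂ (Fin n)} {a b : ℝ}
    (hab : a ≤ b) (hσ : ContDiffOn ℝ 1 σ (Icc a b)) (hmap : MapsTo σ (Icc a b) Ω)
    (hend : Bool) :
    (1/2) * Real.log (1 + ‖ℓ (σ b) - ℓ (σ a)‖ /
        (c - (ℓ (σ (if hend then b else a))).re)) ≤ kobLength Ω σ a b := by
  set u : ℝ → ℂ := fun t => ℓ (σ t) with hu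
  have hucont : ContinuousOn u (Icc a b) := ℓ.continuous.comp_continuousOn hσ.continuousOn
  have hre : ∀ t ∈ Icc a b, (u t).re < c := fun t ht => hΩl _ (hmap ht)
  have hF : IntegrableOn (fun t => kobMetric Ω (σ t) (deriv σ t)) (Icc a b) :=
    kob_integrand_integrableOn hopen hab hσ hmap
  have hd : ∀ t ∈ Ioo a b, ∃ w : ℂ, HasDerivAt u w t ∧
      ‖w‖ / (2*(c - (u t).re)) ≤ kobMetric Ω (σ t) (deriv σ t) := by
    intro t ht
    have htI : t ∈ Icc a b := Ioo_subset_Icc_self ht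
    have hσd : DifferentiableAt ℝ σ t :=
      (hσ.differentiableOn one_ne_zero t htI).differentiableAt (Icc_mem_nhds ht.1 ht.2)
    refine ⟨ℓ (deriv σ t), ?_, kobMetric_ge ℓ hΩl hopen (hmap htI)⟩
    have h1 := ((ℓ.restrictScalars ℝ).hasFDerivAt (x := σ t)).comp_hasDerivAt t hσd.hasDerivAt
    exact h1
  rw [kobLength]
  cases hend
  · simpa [hu] using key_curve_bound' hab hucont hd hre hF
  · simpa [hu] using key_curve_bound hab hucont hd hre hF

lemma kobLength_nonneg {σ : ℝ → EuclideanSpace ℂ (Fin n)} {a b : ℝ} (hab : a ≤ b) :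
    0 ≤ kobLength Ω σ a b :=
  intervalIntegral.integral_nonneg hab (fun _ _ => kobMetric_nonneg)

lemma kobDist_set_nonempty (hconv : Convex ℝ Ω) (hx : x ∈ Ω) {y : EuclideanSpace ℂ (Fin n)}
    (hy : y ∈ Ω) :
    {L : ℝ | ∃ σ : ℝ → EuclideanSpace ℂ (Fin n), ∃ a b : ℝ, a ≤ b ∧
      σ a = x ∧ σ b = y ∧ ContDiffOn ℝ 1 σ (Icc a b) ∧ MapsTo σ (Icc a b) Ω ∧
      L = kobLength Ω σ a b}.Nonempty := by
  refine ⟨kobLength Ω (fun t : ℝ => x + t • (y - x)) 0 1,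
    fun t : ℝ => x + t • (y - x), 0, 1, by norm_num, by simp, by simp, ?_, ?_, rfl⟩
  · exact (contDiff_const.add (contDiff_id.smul contDiff_const)).contDiffOn
  · intro t ht
    exact hconv.add_smul_sub_mem hx hy ht

lemma main_est (hconv : Convex ℝ Ω) (hopen : IsOpen Ω)
    {x y p : EuclideanSpace ℂ (Fin n)} (hx : x ∈ Ω) (hy : y ∈ Ω) (hp : p ∈ Ω)
    (hend : Bool) (hpdef : p = if hend then y else x)
    {S : Set (EuclideanSpace ℂ (Fin n))} (hSsub : S ⊆ frontier Ω) (hSclosed : IsClosed S)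
    (hSne : S.Nonempty)
    (hline : ∀ z ∈ S, ∃ c₀ : ℂ, z - p = c₀ • (x - y)) (hxy : x ≠ y) :
    (1/2) * Real.log (1 + ‖x - y‖ / infDist p S) ≤ kobDist Ω x y := by
  have hxyn : (0:ℝ) < ‖x - y‖ := norm_pos_iff.2 (sub_ne_zero.2 hxy)
  have hpS : p ∉ S := by
    intro hmem
    have := hSsub hmem
    rw [hopen.frontier_eq] at this
    exact this.2 hp
  have hδ0 : 0 < infDist p S := (hSclosed.notMem_iff_infDist_pos hSne).1 hpS
  set δ := infDist p S with hδ
  obtain ⟨astar, haS, hdist⟩ := hSclosed.exists_infDist_eq_dist hSne p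
  have hanΩ : astar ∉ Ω := by
    have := hSsub haS
    rw [hopen.frontier_eq] at this
    exact fun h => this.2 h
  obtain ⟨ℓ, hℓ⟩ := RCLike.geometric_hahn_banach_open_point (𝕜 := ℂ) hconv hopen hanΩ
  set c := (ℓ astar).re with hc
  have hΩl : ∀ z ∈ Ω, (ℓ z).re < c := by
    intro z hz
    have := hℓ z hz
    simpa using this
  have hH0 : 0 < c - (ℓ p).re := by linarith [hΩl p hp]
  obtain ⟨c₀, hc₀⟩ := hline astar haS
  have hδeq : δ = ‖c₀‖ * ‖x - y‖ := by
    rw [hδ, hdist, dist_eq_norm, ← norm_neg, neg_sub, hc₀, norm_smul]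
  have hc₀ne : ‖c₀‖ ≠ 0 := by
    intro h
    rw [hδeq, h, zero_mul] at hδ0
    exact lt_irrefl _ hδ0
  have hkey : (c - (ℓ p).re) * ‖x - y‖ / δ ≤ ‖ℓ (x - y)‖ := by
    have h1 : c - (ℓ p).re ≤ ‖c₀‖ * ‖ℓ (x - y)‖ := by
      have e2 : ℓ (astar - p) = c₀ * ℓ (x - y) := by
        rw [hc₀, ℓ.map_smul]; simp
      calc c - (ℓ p).re = (ℓ (astar - p)).re := by rw [map_sub, Complex.sub_re, hc]
        _ ≤ ‖ℓ (astar - p)‖ := Complex.re_le_norm _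
        _ = ‖c₀‖ * ‖ℓ (x - y)‖ := by rw [e2, norm_mul]
    rw [hδeq, div_le_iff₀ (by positivity)]
    calc (c - (ℓ p).re) * ‖x - y‖ ≤ (‖c₀‖ * ‖ℓ (x - y)‖) * ‖x - y‖ := by
          exact mul_le_mul_of_nonneg_right h1 hxyn.le
      _ = ‖ℓ (x - y)‖ * (‖c₀‖ * ‖x - y‖) := by ring
  have hratio : ‖x - y‖ / δ ≤ ‖ℓ (x - y)‖ / (c - (ℓ p).re) := by
    rw [div_le_div_iff₀ hδ0 hH0]
    rw [div_le_iff₀ hδ0] at hkey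
    linarith [hkey]
  rw [kobDist]
  apply le_csInf (kobDist_set_nonempty hconv hx hy)
  rintro L ⟨σ, a, b, hab, hσa, hσb, hσC, hσM, rfl⟩
  have hcl := curve_lower hopen ℓ hΩl hab hσC hσM hend
  have hpt : σ (if hend then b else a) = p := by
    cases hend <;> simp [hσa, hσb, hpdef]
  rw [hpt, hσa, hσb] at hcl
  have hnorm : ‖ℓ y - ℓ x‖ = ‖ℓ (x - y)‖ := by
    rw [← map_sub, neg_sub x y |>.symm, map_neg, norm_neg]
  rw [hnorm] at hcl
  refine le_trans ?_ hcl
  apply mul_le_mul_of_nonneg_left _ (by norm_num)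
  apply Real.log_le_log (by positivity)
  linarith [hratio]

/-- the Nikolov–Pflug–Thomas lower bound for the Kobayashi distance on a
convex domain. -/
theorem stmt_10 {n : ℕ} (Ω : Set (EuclideanSpace ℂ (Fin n)))
    (hconv : Convex ℝ Ω) (hopen : IsOpen Ω)
    (x y : EuclideanSpace ℂ (Fin n)) (hx : x ∈ Ω) (hy : y ∈ Ω) :
    (1 / 2) * Real.log (1 + dist x y /
        min (deltaDir Ω x (x - y)) (deltaDir Ω y (x - y))) ≤
      kobDist Ω x y := by
  classical
  have hdistnn : 0 ≤ kobDist Ω x y := by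
    apply Real.sInf_nonneg
    rintro L ⟨σ, a, b, hab, -, -, -, -, rfl⟩
    exact kobLength_nonneg hab
  by_cases hxy : x = y
  · subst hxy
    simpa using hdistnn
  have hLy : {z | ∃ c₀ : ℂ, z = y + c₀ • (x - y)}
      = {z | ∃ c₀ : ℂ, z = x + c₀ • (x - y)} := by
    ext z
    constructor
    · rintro ⟨c₀, rfl⟩; exact ⟨c₀ - 1, by module⟩
    · rintro ⟨c₀, rfl⟩; exact ⟨c₀ + 1, by module⟩
  set S := frontier Ω ∩ {z | ∃ c₀ : ℂ, z = x + c₀ • (x - y)} with hSdef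
  have hdx : deltaDir Ω x (x - y) = infDist x S := rfl
  have hdy : deltaDir Ω y (x - y) = infDist y S := by
    rw [deltaDir, hLy]
  rcases eq_empty_or_nonempty S with hSe | hSne2
  · rw [hdx, hdy, hSe, infDist_empty]
    simpa using hdistnn
  have hLclosed : IsClosed {z | ∃ c₀ : ℂ, z = x + c₀ • (x - y)} := by
    have h1 : IsClosed ((Submodule.span ℂ {x - y} : Submodule ℂ (EuclideanSpace ℂ (Fin n)))
        : Set (EuclideanSpace ℂ (Fin n))) :=
      Submodule.closed_of_finiteDimensional _
    have h2 : {z | ∃ c₀ : ℂ, z = x + c₀ • (x - y)}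
        = (fun z => z - x) ⁻¹' ((Submodule.span ℂ {x - y} : Submodule ℂ (EuclideanSpace ℂ (Fin n)))
          : Set (EuclideanSpace ℂ (Fin n))) := by
      ext z
      simp only [mem_preimage, SetLike.mem_coe, Submodule.mem_span_singleton, mem_setOf_eq]
      constructor
      · rintro ⟨c₀, rfl⟩; exact ⟨c₀, (add_sub_cancel_left x _).symm⟩
      · rintro ⟨c₀, hcz⟩; exact ⟨c₀, by rw [hcz]; abel⟩
    rw [h2]
    exact h1.preimage (continuous_id.sub continuous_const)
  have hSclosed : IsClosed S := isClosed_frontier.inter hLclosed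
  have hSsub : S ⊆ frontier Ω := inter_subset_left
  rw [dist_eq_norm, hdx, hdy]
  rcases le_total (infDist x S) (infDist y S) with hmin | hmin
  · rw [min_eq_left hmin]
    apply main_est hconv hopen hx hy hx false rfl hSsub hSclosed hSne2 _ hxy
    rintro z ⟨-, c₀, rfl⟩
    exact ⟨c₀, add_sub_cancel_left x _⟩
  · rw [min_eq_right hmin]
    apply main_est hconv hopen hx hy hy true rfl hSsub hSclosed hSne2 _ hxy
    rintro z ⟨-, c₀, rfl⟩
    exact ⟨c₀ + 1, by module⟩
end
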